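/- arXiv:2105.04157 — 2 statements merged into one kernel-verified Lean document; each statement's English description precedes it below -/
import Mathlib

section
/- Let U ∈ ℝ^{d×d} be a fixed matrix and let X ∈ ℝ^{n×d} be a random matrix such that vec(Xᵀ) follows the Gaussian distribution N(0, Υ_X) for a positive semidefinite matrix Υ_X ∈ ℝ^{nd×nd}. Then there exists an absolute constant c > 0 such that for every u > 0, P(|tr(X U Xᵀ) − E[tr(X U Xᵀ)]| > u) ≤ 2 exp(−c · min(u² / (n ‖Υ_X‖² ‖U‖_F²), u / (‖Υ_X‖ ‖U‖_F))). -/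
open MeasureTheory ProbabilityTheory Matrix
open scoped Classical ProbabilityTheory

noncomputable section

/-- The Frobenius norm of a real matrix. -/
def frobNorm {k l : Type*} [Fintype k] [Fintype l] (M : Matrix k l ℝ) : ℝ :=
  Real.sqrt (∑ i, ∑ j, (M i j) ^ 2)

/-- The spectral (`ℓ₂ → ℓ₂` operator) norm of a real matrix. -/
def specNorm {k l : Type*} [Fintype k] [Fintype l] (M : Matrix k l ℝ) : ℝ :=
  sSup {r : ℝ | ∃ v : l → ℝ, (∑ j, (v j) ^ 2) ≤ 1 ∧ r = Real.sqrt (∑ i, (M.mulVec v i) ^ 2)}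

/-- The trace inner product `⟨A, B⟩ = tr(Aᵀ B)` of two real matrices. -/
def mInner {k l : Type*} [Fintype k] [Fintype l] (A B : Matrix k l ℝ) : ℝ :=
  ∑ i, ∑ j, A i j * B i j

instance matrixMeasurableSpace {k l : Type*} : MeasurableSpace (Matrix k l ℝ) :=
  inferInstanceAs (MeasurableSpace (k → l → ℝ))

/-- The standard Gaussian measure on `ι → ℝ` (i.i.d. `N(0,1)` coordinates). -/
def stdGaussian (ι : Type*) [Fintype ι] : Measure (ι → ℝ) :=
  Measure.pi fun _ => gaussianReal 0 1

/-- The positive semidefinite square root of a positive semidefinite matrix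
(the definition removed from Mathlib, restated with its old value). -/
def Matrix.PosSemidef.sqrt {n : Type*} [Fintype n] [DecidableEq n] {A : Matrix n n ℝ}
    (hA : A.PosSemidef) : Matrix n n ℝ :=
  (hA.1.eigenvectorUnitary : Matrix n n ℝ) * diagonal (Real.sqrt ∘ hA.1.eigenvalues) *
    (star hA.1.eigenvectorUnitary : Matrix n n ℝ)

/-- The centered Gaussian measure `N(0, Υ)` on `ι → ℝ`, with positive semidefinite
covariance matrix `Υ`, realized as the law of `Υ^{1/2} g` for a standard Gaussian `g`. -/
def vecGaussian {ι : Type*} [Fintype ι] [DecidableEq ι] {Υ : Matrix ι ι ℝ}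
    (hΥ : Υ.PosSemidef) : Measure (ι → ℝ) :=
  (stdGaussian ι).map hΥ.sqrt.mulVec

/-- The Gaussian width `w(C) = E sup_{M ∈ C} ⟨G, M⟩` of a set of matrices, where `G` has
i.i.d. standard Gaussian entries. -/
def gaussianWidthM {k l : Type*} [Fintype k] [Fintype l] (C : Set (Matrix k l ℝ)) : ℝ :=
  ∫ G : Matrix k l ℝ, sSup ((fun M : Matrix k l ℝ => ∑ i, ∑ j, G i j * M i j) '' C)
    ∂((Measure.pi fun _ : k => Measure.pi fun _ : l => gaussianReal 0 1) :
        Measure (Matrix k l ℝ))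

/-- Matrices with at most `s` nonzero entries. -/
def sparseSet {k l : Type*} [Fintype k] [Fintype l] (s : ℕ) : Set (Matrix k l ℝ) :=
  {M | (Finset.univ.filter fun p : k × l => M p.1 p.2 ≠ 0).card ≤ s}

/-- The unit sphere in Frobenius norm. -/
def frobSphere (k l : Type*) [Fintype k] [Fintype l] : Set (Matrix k l ℝ) :=
  {M | frobNorm M = 1}

section AuxHW
open Real Filter
open scoped ENNReal NNReal

namespace HW

lemma gauss_pdf_pos (x : ℝ) : 0 < gaussianPDFReal 0 1 x :=
  gaussianPDFReal_pos _ _ _ one_ne_zero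

lemma gauss_pdf_eq (x : ℝ) : gaussianPDFReal 0 1 x = (Real.sqrt (2 * π))⁻¹ * rexp (-x ^ 2 / 2) := by
  simp [gaussianPDFReal]

/-- integral against the standard gaussian as a weighted Lebesgue integral -/
lemma integral_gaussianReal_eq (g : ℝ → ℝ) :
    ∫ x, g x ∂(gaussianReal 0 1) = ∫ x, gaussianPDFReal 0 1 x * g x := by
  rw [gaussianReal_of_var_ne_zero _ one_ne_zero]
  have : (gaussianPDF 0 1) = fun x => ((fun y => (gaussianPDFReal 0 1 y).toNNReal) x : ℝ≥0∞) := by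
    ext x; rfl
  rw [this, integral_withDensity_eq_integral_smul
    ((measurable_gaussianPDFReal 0 1).real_toNNReal)]
  congr 1 with x
  simp [NNReal.smul_def, Real.coe_toNNReal _ (gauss_pdf_pos x).le]

lemma integrable_pdf_mul_exp_sq {s : ℝ} (hs : s < 1/2) :
    Integrable (fun x => gaussianPDFReal 0 1 x * rexp (s * x ^ 2)) := by
  have h : ∀ x : ℝ, gaussianPDFReal 0 1 x * rexp (s * x ^ 2)
      = (Real.sqrt (2 * π))⁻¹ * rexp (-(1/2 - s) * x ^ 2) := by
    intro x
    rw [gauss_pdf_eq, mul_assoc, ← Real.exp_add]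
    ring_nf
  simp only [h]
  exact (integrable_exp_neg_mul_sq (by linarith)).const_mul _

lemma integrable_exp_sq_gaussian {s : ℝ} (hs : s < 1/2) :
    Integrable (fun x => rexp (s * x ^ 2)) (gaussianReal 0 1) := by
  rw [gaussianReal_of_var_ne_zero _ one_ne_zero]
  have : (gaussianPDF 0 1) = fun x => ((fun y => (gaussianPDFReal 0 1 y).toNNReal) x : ℝ≥0∞) := by
    ext x; rfl
  rw [this, integrable_withDensity_iff_integrable_smul
    ((measurable_gaussianPDFReal 0 1).real_toNNReal)]
  have := integrable_pdf_mul_exp_sq hs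
  refine this.congr (Eventually.of_forall fun x => ?_)
  simp [NNReal.smul_def, Real.coe_toNNReal _ (gauss_pdf_pos x).le]

lemma integral_exp_sq_gaussian {s : ℝ} (hs : s < 1/2) :
    ∫ x, rexp (s * x ^ 2) ∂(gaussianReal 0 1) = Real.sqrt (1 - 2 * s)⁻¹ := by
  rw [integral_gaussianReal_eq]
  have h : ∀ x : ℝ, gaussianPDFReal 0 1 x * rexp (s * x ^ 2)
      = (Real.sqrt (2 * π))⁻¹ * rexp (-(1/2 - s) * x ^ 2) := by
    intro x
    rw [gauss_pdf_eq, mul_assoc, ← Real.exp_add]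
    ring_nf
  simp only [h]
  rw [integral_const_mul, integral_gaussian]
  rw [← Real.sqrt_inv, ← Real.sqrt_mul (by positivity)]
  congr 1
  have hπ : (0:ℝ) < π := pi_pos
  have h1 : (1 - 2*s) ≠ 0 := by linarith
  field_simp

end HW

namespace HW2

lemma deriv_aux (x : ℝ) :
    HasDerivAt (fun y : ℝ => -y * rexp (-(1/2) * y ^ 2))
      ((x ^ 2 - 1) * rexp (-(1/2) * x ^ 2)) x := by
  have hexp : HasDerivAt (fun y : ℝ => rexp (-(1/2) * y ^ 2))
      (rexp (-(1/2) * x ^ 2) * (-(1/2) * (2 * x ^ 1))) x :=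
    (((hasDerivAt_pow 2 x).const_mul (-(1/2 : ℝ)))).exp
  have hid : HasDerivAt (fun y : ℝ => -y) (-1 : ℝ) x := (hasDerivAt_id x).neg
  have : HasDerivAt (fun y : ℝ => -y * rexp (-(1/2) * y ^ 2))
      (-1 * rexp (-(1/2) * x ^ 2) + -x * (rexp (-(1/2) * x ^ 2) * (-(1/2) * (2 * x ^ 1)))) x :=
    hid.mul hexp
  convert this using 1
  ring

lemma tendsto_aux_top :
    Tendsto (fun x : ℝ => -x * rexp (-(1/2) * x ^ 2)) atTop (nhds 0) := by
  have h := rpow_mul_exp_neg_mul_sq_isLittleO_exp_neg (b := 1/2) (by norm_num) 1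
  have hT : Tendsto (fun x : ℝ => rexp (-(1/2) * x)) atTop (nhds 0) := by
    have := (Real.tendsto_exp_neg_atTop_nhds_zero).comp
      (Filter.Tendsto.atTop_div_const (by norm_num : (0:ℝ) < 2) (tendsto_id (α := ℝ)))
    refine this.congr fun x => ?_
    simp [Function.comp]
    ring_nf
  have h2 : Tendsto (fun x : ℝ => x ^ (1:ℝ) * rexp (-(1/2) * x ^ 2)) atTop (nhds 0) :=
    h.trans_tendsto hT
  have h3 : Tendsto (fun x : ℝ => x * rexp (-(1/2) * x ^ 2)) atTop (nhds 0) := by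
    refine h2.congr fun x => ?_
    rw [Real.rpow_one]
  simpa using h3.neg

lemma tendsto_aux_bot :
    Tendsto (fun x : ℝ => -x * rexp (-(1/2) * x ^ 2)) atBot (nhds 0) := by
  have h3 : Tendsto (fun x : ℝ => x * rexp (-(1/2) * x ^ 2)) atTop (nhds 0) := by
    have := tendsto_aux_top
    simpa using this.neg
  have := h3.comp tendsto_neg_atBot_atTop
  refine this.congr fun x => ?_
  simp [Function.comp, neg_sq]

lemma integrable_sq_exp : Integrable (fun x : ℝ => x ^ 2 * rexp (-(1/2) * x ^ 2)) := by
  have := integrable_rpow_mul_exp_neg_mul_sq (b := 1/2) (by norm_num) (s := 2) (by norm_num)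
  refine this.congr (Eventually.of_forall fun x => ?_)
  norm_num [Real.rpow_natCast x 2]

lemma integral_center : ∫ x : ℝ, (x ^ 2 - 1) * rexp (-(1/2) * x ^ 2) = 0 := by
  have := integral_of_hasDerivAt_of_tendsto (f := fun y : ℝ => -y * rexp (-(1/2) * y ^ 2))
    (f' := fun x : ℝ => (x ^ 2 - 1) * rexp (-(1/2) * x ^ 2))
    (fun x => deriv_aux x) ?_ tendsto_aux_bot tendsto_aux_top
  · simpa using this
  · have h2 : Integrable (fun x : ℝ => rexp (-(1/2) * x ^ 2)) :=
      integrable_exp_neg_mul_sq (by norm_num)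
    refine (integrable_sq_exp.sub h2).congr (Eventually.of_forall fun x => ?_)
    simp only [Pi.sub_apply]
    ring

lemma integral_sq_gaussian : ∫ x, x ^ 2 ∂(gaussianReal 0 1) = 1 := by
  rw [HW.integral_gaussianReal_eq]
  have h2 : Integrable (fun x : ℝ => rexp (-(1/2) * x ^ 2)) :=
    integrable_exp_neg_mul_sq (by norm_num)
  have key : ∫ x : ℝ, x ^ 2 * rexp (-(1/2) * x ^ 2) = Real.sqrt (2 * π) := by
    have hsub : ∫ x : ℝ, (x ^ 2 - 1) * rexp (-(1/2) * x ^ 2)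
        = (∫ x : ℝ, x ^ 2 * rexp (-(1/2) * x ^ 2)) - ∫ x : ℝ, rexp (-(1/2) * x ^ 2) := by
      rw [← integral_sub integrable_sq_exp h2]
      congr 1 with x
      ring
    have h0 := integral_center
    rw [hsub] at h0
    have hg : ∫ x : ℝ, rexp (-(1/2) * x ^ 2) = Real.sqrt (2 * π) := by
      rw [integral_gaussian]
      congr 1
      rw [div_div_eq_mul_div]
      ring
    linarith
  calc ∫ x, gaussianPDFReal 0 1 x * x ^ 2
      = (Real.sqrt (2 * π))⁻¹ * ∫ x : ℝ, x ^ 2 * rexp (-(1/2) * x ^ 2) := by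
        rw [← integral_const_mul]
        congr 1 with x
        rw [HW.gauss_pdf_eq]
        ring_nf
    _ = 1 := by
        rw [key, inv_mul_cancel₀ (by positivity)]

lemma key_mgf_bound {s : ℝ} (hs : |s| ≤ 4⁻¹) :
    ∫ x, rexp (s * (x ^ 2 - 1)) ∂(gaussianReal 0 1) ≤ rexp (4 * s ^ 2) := by
  obtain ⟨hs1, hs2⟩ := abs_le.mp hs
  have hslt : s < 1/2 := by linarith
  have ha : (0:ℝ) < 1 - 2 * s := by linarith
  have heq : ∫ x, rexp (s * (x ^ 2 - 1)) ∂(gaussianReal 0 1)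
      = rexp (-s) * Real.sqrt (1 - 2 * s)⁻¹ := by
    rw [← HW.integral_exp_sq_gaussian hslt, ← integral_const_mul]
    congr 1 with x
    rw [← Real.exp_add]
    ring_nf
  rw [heq]
  have hy : (0:ℝ) < 1 + (8 * s ^ 2 + 2 * s) := by nlinarith
  have h2 : (1 - 2 * s)⁻¹ ≤ rexp (8 * s ^ 2 + 2 * s) := by
    have hstep : (1 - 2 * s)⁻¹ ≤ 1 + (8 * s ^ 2 + 2 * s) := by
      rw [inv_le_iff_one_le_mul₀ ha]
      nlinarith
    exact hstep.trans (by linarith [Real.add_one_le_exp (8 * s ^ 2 + 2 * s)])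
  have h3 : Real.sqrt (1 - 2 * s)⁻¹ ≤ rexp (4 * s ^ 2 + s) := by
    have h4 := Real.sqrt_le_sqrt h2
    rwa [show (8 * s ^ 2 + 2 * s) = (4 * s ^ 2 + s) + (4 * s ^ 2 + s) by ring,
      Real.exp_add, Real.sqrt_mul_self (exp_nonneg _)] at h4
  calc rexp (-s) * Real.sqrt (1 - 2 * s)⁻¹ ≤ rexp (-s) * rexp (4 * s ^ 2 + s) :=
        mul_le_mul_of_nonneg_left h3 (exp_nonneg _)
    _ = rexp (4 * s ^ 2) := by rw [← Real.exp_add]; ring_nf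

end HW2

namespace HW3

variable {ι : Type*} [Fintype ι]

instance : IsProbabilityMeasure (stdGaussian ι) := by
  unfold _root_.stdGaussian; infer_instance

lemma integral_pi_prod (f : ι → ℝ → ℝ) (hfi : ∀ i, Integrable (f i) (gaussianReal 0 1)) :
    Integrable (fun x : ι → ℝ => ∏ i, f i (x i)) (stdGaussian ι) ∧
    ∫ x, ∏ i, f i (x i) ∂(stdGaussian ι) = ∏ i, ∫ y, f i y ∂(gaussianReal 0 1) := by
  letI : MeasureSpace ℝ := ⟨gaussianReal 0 1⟩
  haveI : SigmaFinite (volume : Measure ℝ) :=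
    inferInstanceAs (SigmaFinite (gaussianReal 0 1))
  constructor
  · exact MeasureTheory.Integrable.fintype_prod (f := f) hfi
  · exact MeasureTheory.integral_fintype_prod_volume_eq_prod f

lemma integral_exp_sum_le (lam : ι → ℝ) (t : ℝ) (hbd : ∀ i, |t * lam i| ≤ 4⁻¹) :
    Integrable (fun x : ι → ℝ => rexp (t * ∑ i, lam i * ((x i) ^ 2 - 1))) (stdGaussian ι) ∧
    ∫ x, rexp (t * ∑ i, lam i * ((x i) ^ 2 - 1)) ∂(stdGaussian ι)
      ≤ rexp (4 * t ^ 2 * ∑ i, (lam i) ^ 2) := by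
  have hrw : (fun x : ι → ℝ => rexp (t * ∑ i, lam i * ((x i) ^ 2 - 1)))
      = fun x : ι → ℝ => ∏ i, rexp (t * lam i * ((x i) ^ 2 - 1)) := by
    funext x
    rw [← Real.exp_sum]
    congr 1
    rw [Finset.mul_sum]
    congr 1 with i
    ring
  have hint : ∀ i, Integrable (fun y : ℝ => rexp (t * lam i * (y ^ 2 - 1))) (gaussianReal 0 1) := by
    intro i
    have h4 : t * lam i < 1/2 := lt_of_le_of_lt (le_abs_self _) (lt_of_le_of_lt (hbd i) (by norm_num))
    have := (HW.integrable_exp_sq_gaussian h4).const_mul (rexp (-(t * lam i)))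
    refine this.congr (Filter.Eventually.of_forall fun y => ?_)
    show rexp (-(t * lam i)) * rexp (t * lam i * y ^ 2) = rexp (t * lam i * (y ^ 2 - 1))
    rw [← Real.exp_add]
    ring_nf
  obtain ⟨hI, hEq⟩ := integral_pi_prod (fun i y => rexp (t * lam i * (y ^ 2 - 1))) hint
  rw [hrw]
  refine ⟨hI, ?_⟩
  rw [hEq]
  calc ∏ i, ∫ y, rexp (t * lam i * (y ^ 2 - 1)) ∂(gaussianReal 0 1)
      ≤ ∏ i, rexp (4 * (t * lam i) ^ 2) := by
        refine Finset.prod_le_prod (fun i _ => integral_nonneg fun y => (Real.exp_pos _).le)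
          (fun i _ => ?_)
        exact HW2.key_mgf_bound (hbd i)
    _ = rexp (4 * t ^ 2 * ∑ i, (lam i) ^ 2) := by
        rw [← Real.exp_sum]
        congr 1
        rw [Finset.mul_sum]
        congr 1 with i
        ring

lemma tail_one_sided (lam : ι → ℝ) (K σ2 u : ℝ) (hK : 0 < K) (hσ : 0 < σ2)
    (hbd : ∀ i, |lam i| ≤ K) (hsum : ∑ i, (lam i) ^ 2 ≤ σ2) (hu : 0 < u) :
    ((stdGaussian ι) {x | u ≤ ∑ i, lam i * ((x i) ^ 2 - 1)}).toReal
      ≤ rexp (-(16:ℝ)⁻¹ * min (u ^ 2 / σ2) (u / K)) := by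
  set t := min (u / (8 * σ2)) (1 / (4 * K)) with ht
  have ht0 : 0 < t := lt_min (by positivity) (by positivity)
  have hbd' : ∀ i, |t * lam i| ≤ 4⁻¹ := by
    intro i
    rw [abs_mul, abs_of_pos ht0]
    calc t * |lam i| ≤ (1 / (4 * K)) * K :=
          mul_le_mul (min_le_right _ _) (hbd i) (abs_nonneg _) (by positivity)
      _ = 4⁻¹ := by field_simp
  obtain ⟨hI, hEq⟩ := integral_exp_sum_le lam t hbd'
  have hch := measure_ge_le_exp_mul_mgf (X := fun x : ι → ℝ => ∑ i, lam i * ((x i) ^ 2 - 1))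
      (μ := stdGaussian ι) (t := t) u ht0.le hI
  have hmgf : mgf (fun x : ι → ℝ => ∑ i, lam i * ((x i) ^ 2 - 1)) (stdGaussian ι) t
      = ∫ x, rexp (t * ∑ i, lam i * ((x i) ^ 2 - 1)) ∂(stdGaussian ι) := rfl
  have hstep : ((stdGaussian ι) {x | u ≤ ∑ i, lam i * ((x i) ^ 2 - 1)}).toReal
      ≤ rexp (4 * t ^ 2 * σ2 - t * u) := by
    refine hch.trans ?_
    rw [hmgf]
    calc rexp (-t * u) * ∫ x, rexp (t * ∑ i, lam i * ((x i) ^ 2 - 1)) ∂(stdGaussian ι)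
        ≤ rexp (-t * u) * rexp (4 * t ^ 2 * σ2) := by
          refine mul_le_mul_of_nonneg_left (hEq.trans ?_) (Real.exp_nonneg _)
          exact Real.exp_le_exp.mpr (by nlinarith [sq_nonneg t])
      _ = rexp (4 * t ^ 2 * σ2 - t * u) := by rw [← Real.exp_add]; ring_nf
  refine hstep.trans (Real.exp_le_exp.mpr ?_)
  rcases le_or_gt (u / (8 * σ2)) (1 / (4 * K)) with hc | hc
  · rw [ht, min_eq_left hc]
    have he : 4 * (u / (8 * σ2)) ^ 2 * σ2 - (u / (8 * σ2)) * u = -(16:ℝ)⁻¹ * (u ^ 2 / σ2) := by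
      field_simp
      ring
    rw [he]
    have hmin : min (u ^ 2 / σ2) (u / K) ≤ u ^ 2 / σ2 := min_le_left _ _
    nlinarith
  · rw [ht, min_eq_right hc.le]
    have hσ2lt : 8 * σ2 < 4 * K * u := by
      rw [div_lt_div_iff₀ (by positivity) (by positivity)] at hc
      linarith
    have hstep2 : 4 * (1 / (4 * K)) ^ 2 * σ2 - (1 / (4 * K)) * u ≤ -(16:ℝ)⁻¹ * (u / K) := by
      rw [show 4 * (1 / (4 * K)) ^ 2 * σ2 - 1 / (4 * K) * u = (4 * σ2 - 4 * K * u) / (16 * K ^ 2) by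
            field_simp; ring,
          show -(16:ℝ)⁻¹ * (u / K) = (-(K * u)) / (16 * K ^ 2) by field_simp]
      rw [div_le_div_iff_of_pos_right (by positivity)]
      nlinarith
    refine hstep2.trans ?_
    have hmin : min (u ^ 2 / σ2) (u / K) ≤ u / K := min_le_right _ _
    nlinarith [div_nonneg hu.le hK.le]

end HW3

namespace HW4

open HW3

variable {ι : Type*} [Fintype ι]

lemma tail_two_sided (lam : ι → ℝ) (K σ2 u : ℝ) (hK : 0 < K) (hσ : 0 < σ2)
    (hbd : ∀ i, |lam i| ≤ K) (hsum : ∑ i, (lam i) ^ 2 ≤ σ2) (hu : 0 < u) :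
    ((stdGaussian ι) {x | u < |(∑ i, lam i * (x i) ^ 2) - ∑ i, lam i|}).toReal
      ≤ 2 * rexp (-(16:ℝ)⁻¹ * min (u ^ 2 / σ2) (u / K)) := by
  set A := {x : ι → ℝ | u ≤ ∑ i, lam i * ((x i) ^ 2 - 1)} with hA
  set B := {x : ι → ℝ | u ≤ ∑ i, (-lam i) * ((x i) ^ 2 - 1)} with hB
  have hsub : {x : ι → ℝ | u < |(∑ i, lam i * (x i) ^ 2) - ∑ i, lam i|} ⊆ A ∪ B := by
    intro x hx
    simp only [Set.mem_setOf_eq] at hx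
    have h1 : (∑ i, lam i * (x i) ^ 2) - ∑ i, lam i = ∑ i, lam i * ((x i) ^ 2 - 1) := by
      rw [← Finset.sum_sub_distrib]
      congr 1 with i
      ring
    rw [h1] at hx
    have h2 : ∑ i, -lam i * ((x i) ^ 2 - 1) = -∑ i, lam i * ((x i) ^ 2 - 1) := by
      rw [← Finset.sum_neg_distrib]
      congr 1 with i
      ring
    rcases le_abs.mp hx.le with h | h
    · exact Or.inl h
    · refine Or.inr ?_
      show u ≤ ∑ i, -lam i * ((x i) ^ 2 - 1)
      rw [h2]
      exact h
  have hAb := tail_one_sided lam K σ2 u hK hσ hbd hsum hu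
  have hBb := tail_one_sided (fun i => -lam i) K σ2 u hK hσ
      (fun i => by simpa using hbd i) (by simpa using hsum) hu
  have hmono := measure_mono (μ := stdGaussian ι) hsub
  have hun := measure_union_le (μ := stdGaussian ι) A B
  have hfin : (stdGaussian ι) A + (stdGaussian ι) B ≠ ⊤ :=
    ENNReal.add_ne_top.mpr ⟨measure_ne_top _ _, measure_ne_top _ _⟩
  calc ((stdGaussian ι) {x | u < |(∑ i, lam i * (x i) ^ 2) - ∑ i, lam i|}).toReal
      ≤ ((stdGaussian ι) A + (stdGaussian ι) B).toReal :=
        ENNReal.toReal_mono hfin (hmono.trans hun)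
    _ = ((stdGaussian ι) A).toReal + ((stdGaussian ι) B).toReal :=
        ENNReal.toReal_add (measure_ne_top _ _) (measure_ne_top _ _)
    _ ≤ 2 * rexp (-(16:ℝ)⁻¹ * min (u ^ 2 / σ2) (u / K)) := by
        have := add_le_add hAb hBb
        rw [hA, hB]
        linarith

end HW4

namespace HW5

variable {ι : Type*} [Fintype ι] [DecidableEq ι]

def G (x : ι → ℝ) : ℝ≥0∞ := ENNReal.ofReal (∏ i, gaussianPDFReal 0 1 (x i))

lemma measurable_G : Measurable (G (ι := ι)) :=
  (Finset.measurable_prod Finset.univ fun i _ =>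
    (measurable_gaussianPDFReal 0 1).comp (measurable_pi_apply i)).ennreal_ofReal

lemma measurable_mulVec (Q : Matrix ι ι ℝ) : Measurable (Q.mulVec) := by
  refine measurable_pi_lambda _ fun i => ?_
  simp only [Matrix.mulVec, dotProduct]
  exact Finset.measurable_sum Finset.univ fun j _ => (measurable_pi_apply j).const_mul _

lemma stdGaussian_eq_withDensity :
    stdGaussian ι = (volume : Measure (ι → ℝ)).withDensity G := by
  unfold _root_.stdGaussian
  refine Measure.pi_eq fun s hs => ?_
  classical
  set g : ι → ℝ → ℝ := fun i => (s i).indicator (gaussianPDFReal 0 1) with hg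
  have hgnn : ∀ i (y : ℝ), 0 ≤ g i y := fun i y =>
    Set.indicator_nonneg (fun z _ => gaussianPDFReal_nonneg 0 1 z) y
  have hgint : ∀ i, Integrable (g i) := fun i =>
    (integrable_gaussianPDFReal 0 1).indicator (hs i)
  have hpoint : ∀ x : ι → ℝ, (Set.pi Set.univ s).indicator G x
      = ENNReal.ofReal (∏ i, g i (x i)) := by
    intro x
    by_cases hx : x ∈ Set.pi Set.univ s
    · rw [Set.indicator_of_mem hx]
      unfold G
      congr 1
      refine Finset.prod_congr rfl fun i _ => ?_
      rw [hg]
      exact (Set.indicator_of_mem (Set.mem_univ_pi.mp hx i) _).symm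
    · obtain ⟨i, hi⟩ : ∃ i, x i ∉ s i := by
        by_contra hcon
        push_neg at hcon
        exact hx (Set.mem_univ_pi.mpr hcon)
      rw [Set.indicator_of_notMem hx,
        Finset.prod_eq_zero (Finset.mem_univ i) (by rw [hg]; exact Set.indicator_of_notMem hi _),
        ENNReal.ofReal_zero]
  have hpi : MeasurableSet (Set.pi Set.univ s) := MeasurableSet.univ_pi hs
  rw [withDensity_apply _ hpi, ← lintegral_indicator hpi, lintegral_congr hpoint,
    ← ofReal_integral_eq_lintegral_ofReal
      (show Integrable (fun x : ι → ℝ => ∏ i, g i (x i)) (volume : Measure (ι → ℝ)) from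
        Integrable.fintype_prod hgint)
      (Filter.Eventually.of_forall fun x => Finset.prod_nonneg fun i _ => hgnn i (x i)),
    integral_fintype_prod_volume_eq_prod g,
    ENNReal.ofReal_prod_of_nonneg (fun i _ => integral_nonneg (hgnn i))]
  refine Finset.prod_congr rfl fun i _ => ?_
  rw [hg]
  simp only
  rw [integral_indicator (hs i)]
  exact (gaussianReal_apply_eq_integral 0 one_ne_zero (s i)).symm

lemma map_withDensity (L : (ι → ℝ) → (ι → ℝ)) (hL : Measurable L) (μ : Measure (ι → ℝ))
    (Gf : (ι → ℝ) → ℝ≥0∞) (hGf : Measurable Gf) :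
    Measure.map L (μ.withDensity (Gf ∘ L)) = (Measure.map L μ).withDensity Gf := by
  ext s hs
  rw [Measure.map_apply hL hs, withDensity_apply _ (hL hs), withDensity_apply _ hs,
    setLIntegral_map hs hGf hL]
  rfl

lemma map_mulVec_volume (Q : Matrix ι ι ℝ) (hQ : Qᵀ * Q = 1) :
    Measure.map Q.mulVec (volume : Measure (ι → ℝ)) = volume := by
  have hdet : Q.det * Q.det = 1 := by
    have h := congrArg Matrix.det hQ
    rwa [Matrix.det_mul, Matrix.det_transpose, Matrix.det_one] at h
  have hdet0 : Q.det ≠ 0 := by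
    intro h0
    rw [h0, mul_zero] at hdet
    norm_num at hdet
  have habs : |Q.det| = 1 := by
    nlinarith [abs_nonneg Q.det, abs_mul_abs_self Q.det]
  have h := Real.map_matrix_volume_pi_eq_smul_volume_pi (M := Q) hdet0
  have hfun : ⇑(Matrix.toLin' Q) = Q.mulVec := funext fun x => Matrix.toLin'_apply Q x
  rw [hfun] at h
  rw [h, abs_inv, habs]
  simp

lemma prod_pdf (v : ι → ℝ) :
    ∏ i, gaussianPDFReal 0 1 (v i)
      = (Real.sqrt (2 * π))⁻¹ ^ Fintype.card ι * rexp (-(∑ i, (v i) ^ 2) / 2) := by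
  calc ∏ i, gaussianPDFReal 0 1 (v i)
      = ∏ i, ((Real.sqrt (2 * π))⁻¹ * rexp (-(v i) ^ 2 / 2)) := by
        exact Finset.prod_congr rfl fun i _ => HW.gauss_pdf_eq (v i)
    _ = (Real.sqrt (2 * π))⁻¹ ^ Fintype.card ι * ∏ i, rexp (-(v i) ^ 2 / 2) := by
        rw [Finset.prod_mul_distrib, Finset.prod_const, Finset.card_univ]
    _ = (Real.sqrt (2 * π))⁻¹ ^ Fintype.card ι * rexp (-(∑ i, (v i) ^ 2) / 2) := by
        rw [← Real.exp_sum]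
        congr 1
        rw [← Finset.sum_div, ← Finset.sum_neg_distrib]

lemma sum_sq_mulVec (Q : Matrix ι ι ℝ) (hQ : Qᵀ * Q = 1) (x : ι → ℝ) :
    ∑ i, (Q.mulVec x i) ^ 2 = ∑ i, (x i) ^ 2 := by
  have h1 : ∀ v : ι → ℝ, ∑ i, (v i) ^ 2 = v ⬝ᵥ v := by
    intro v
    simp [dotProduct, sq]
  rw [h1, h1, Matrix.dotProduct_mulVec, ← Matrix.mulVec_transpose, Matrix.mulVec_mulVec, hQ,
    Matrix.one_mulVec]

lemma G_comp (Q : Matrix ι ι ℝ) (hQ : Qᵀ * Q = 1) :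
    (G (ι := ι)) ∘ Q.mulVec = G := by
  funext x
  simp only [Function.comp_apply]
  unfold G
  rw [prod_pdf, prod_pdf, sum_sq_mulVec Q hQ]

lemma map_mulVec_stdGaussian (Q : Matrix ι ι ℝ) (hQ : Qᵀ * Q = 1) :
    Measure.map Q.mulVec (stdGaussian ι) = stdGaussian ι := by
  rw [stdGaussian_eq_withDensity]
  conv_lhs => rw [← G_comp Q hQ]
  rw [map_withDensity _ (measurable_mulVec Q) _ _ measurable_G, map_mulVec_volume Q hQ]

end HW5

namespace HW6

attribute [local simp] Matrix.mulVec_zero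

variable {κ ι : Type*} [Fintype κ] [Fintype ι]

def fro2 (M : Matrix κ ι ℝ) : ℝ := ∑ p, ∑ q, (M p q) ^ 2

lemma fro2_nonneg (M : Matrix κ ι ℝ) : 0 ≤ fro2 M :=
  Finset.sum_nonneg fun p _ => Finset.sum_nonneg fun q _ => sq_nonneg _

lemma frobNorm_sq (M : Matrix κ ι ℝ) : frobNorm M ^ 2 = fro2 M :=
  Real.sq_sqrt (fro2_nonneg M)

lemma frobNorm_nonneg (M : Matrix κ ι ℝ) : 0 ≤ frobNorm M := Real.sqrt_nonneg _

lemma specSet_bddAbove (M : Matrix κ ι ℝ) :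
    BddAbove {r : ℝ | ∃ v : ι → ℝ, (∑ j, (v j) ^ 2) ≤ 1 ∧
      r = Real.sqrt (∑ i, (M.mulVec v i) ^ 2)} := by
  refine ⟨Real.sqrt (fro2 M), fun r hr => ?_⟩
  obtain ⟨v, hv, rfl⟩ := hr
  apply Real.sqrt_le_sqrt
  calc ∑ i, (M.mulVec v i) ^ 2
      ≤ ∑ i, (∑ j, (M i j) ^ 2) * ∑ j, (v j) ^ 2 := by
        refine Finset.sum_le_sum fun i _ => ?_
        simpa [Matrix.mulVec, dotProduct] using
          Finset.sum_mul_sq_le_sq_mul_sq Finset.univ (fun j => M i j) v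
    _ ≤ ∑ i, (∑ j, (M i j) ^ 2) * 1 := by
        refine Finset.sum_le_sum fun i _ => ?_
        have h0 : 0 ≤ ∑ j, (M i j) ^ 2 := Finset.sum_nonneg fun j _ => sq_nonneg _
        exact mul_le_mul_of_nonneg_left hv h0
    _ = fro2 M := by simp [fro2]

lemma zero_mem_specSet (M : Matrix κ ι ℝ) :
    (0:ℝ) ∈ {r : ℝ | ∃ v : ι → ℝ, (∑ j, (v j) ^ 2) ≤ 1 ∧
      r = Real.sqrt (∑ i, (M.mulVec v i) ^ 2)} :=
  ⟨0, by simp, by simp⟩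

lemma specNorm_nonneg (M : Matrix κ ι ℝ) : 0 ≤ specNorm M :=
  le_csSup (specSet_bddAbove M) (zero_mem_specSet M)

lemma sqrt_sum_sq_mulVec_le (M : Matrix κ ι ℝ) (v : ι → ℝ) :
    Real.sqrt (∑ i, (M.mulVec v i) ^ 2) ≤ specNorm M * Real.sqrt (∑ j, (v j) ^ 2) := by
  rcases eq_or_ne v 0 with rfl | hv
  · simp
  · have hpos : 0 < ∑ j, (v j) ^ 2 := by
      obtain ⟨j, hj⟩ := Function.ne_iff.mp hv
      exact Finset.sum_pos' (fun _ _ => sq_nonneg _) ⟨j, Finset.mem_univ j, pow_two_pos_of_ne_zero hj⟩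
    set c := Real.sqrt (∑ j, (v j) ^ 2) with hc
    have hc0 : 0 < c := Real.sqrt_pos.mpr hpos
    have hunit : ∑ j, ((c⁻¹ • v) j) ^ 2 ≤ 1 := by
      have : ∑ j, ((c⁻¹ • v) j) ^ 2 = c⁻¹ ^ 2 * ∑ j, (v j) ^ 2 := by
        rw [Finset.mul_sum]
        refine Finset.sum_congr rfl fun j _ => ?_
        simp [Pi.smul_apply, smul_eq_mul, mul_pow]
      rw [this, hc, inv_pow, Real.sq_sqrt hpos.le, inv_mul_cancel₀ hpos.ne']
    have hmem : Real.sqrt (∑ i, (M.mulVec (c⁻¹ • v) i) ^ 2)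
        ∈ {r : ℝ | ∃ w : ι → ℝ, (∑ j, (w j) ^ 2) ≤ 1 ∧
            r = Real.sqrt (∑ i, (M.mulVec w i) ^ 2)} := ⟨c⁻¹ • v, hunit, rfl⟩
    have hle := le_csSup (specSet_bddAbove M) hmem
    have heq : Real.sqrt (∑ i, (M.mulVec (c⁻¹ • v) i) ^ 2)
        = c⁻¹ * Real.sqrt (∑ i, (M.mulVec v i) ^ 2) := by
      rw [Matrix.mulVec_smul]
      have : ∑ i, ((c⁻¹ • M.mulVec v) i) ^ 2 = c⁻¹ ^ 2 * ∑ i, (M.mulVec v i) ^ 2 := by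
        rw [Finset.mul_sum]
        refine Finset.sum_congr rfl fun i _ => ?_
        simp [Pi.smul_apply, smul_eq_mul, mul_pow]
      rw [this, Real.sqrt_mul (by positivity), Real.sqrt_sq (by positivity)]
    rw [heq] at hle
    calc Real.sqrt (∑ i, (M.mulVec v i) ^ 2)
        = c * (c⁻¹ * Real.sqrt (∑ i, (M.mulVec v i) ^ 2)) := by
          field_simp
      _ ≤ c * specNorm M := by
          exact mul_le_mul_of_nonneg_left hle hc0.le
      _ = specNorm M * c := mul_comm _ _

lemma sum_sq_mulVec_le (M : Matrix κ ι ℝ) (v : ι → ℝ) :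
    ∑ i, (M.mulVec v i) ^ 2 ≤ specNorm M ^ 2 * ∑ j, (v j) ^ 2 := by
  have h := sqrt_sum_sq_mulVec_le M v
  have h1 : 0 ≤ ∑ i, (M.mulVec v i) ^ 2 := Finset.sum_nonneg fun i _ => sq_nonneg _
  have h2 : 0 ≤ ∑ j, (v j) ^ 2 := Finset.sum_nonneg fun j _ => sq_nonneg _
  have := mul_self_le_mul_self (Real.sqrt_nonneg _) h
  rw [Real.mul_self_sqrt h1] at this
  calc ∑ i, (M.mulVec v i) ^ 2
      ≤ (specNorm M * Real.sqrt (∑ j, (v j) ^ 2)) * (specNorm M * Real.sqrt (∑ j, (v j) ^ 2)) :=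
        this
    _ = specNorm M ^ 2 * (Real.sqrt (∑ j, (v j) ^ 2) * Real.sqrt (∑ j, (v j) ^ 2)) := by ring
    _ = specNorm M ^ 2 * ∑ j, (v j) ^ 2 := by rw [Real.mul_self_sqrt h2]

lemma dot_quad_le (M : Matrix ι ι ℝ) (v : ι → ℝ) :
    v ⬝ᵥ (M.mulVec v) ≤ specNorm M * ∑ j, (v j) ^ 2 := by
  have h2 : 0 ≤ ∑ j, (v j) ^ 2 := Finset.sum_nonneg fun j _ => sq_nonneg _
  have hCS := Finset.sum_mul_sq_le_sq_mul_sq Finset.univ v (M.mulVec v)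
  calc v ⬝ᵥ (M.mulVec v) ≤ |v ⬝ᵥ (M.mulVec v)| := le_abs_self _
    _ = Real.sqrt ((v ⬝ᵥ M.mulVec v) ^ 2) := (Real.sqrt_sq_eq_abs _).symm
    _ ≤ Real.sqrt ((∑ j, (v j) ^ 2) * ∑ i, (M.mulVec v i) ^ 2) := by
        apply Real.sqrt_le_sqrt
        simpa [dotProduct] using hCS
    _ = Real.sqrt (∑ j, (v j) ^ 2) * Real.sqrt (∑ i, (M.mulVec v i) ^ 2) :=
        Real.sqrt_mul h2 _
    _ ≤ Real.sqrt (∑ j, (v j) ^ 2) * (specNorm M * Real.sqrt (∑ j, (v j) ^ 2)) :=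
        mul_le_mul_of_nonneg_left (sqrt_sum_sq_mulVec_le M v) (Real.sqrt_nonneg _)
    _ = specNorm M * (Real.sqrt (∑ j, (v j) ^ 2) * Real.sqrt (∑ j, (v j) ^ 2)) := by ring
    _ = specNorm M * ∑ j, (v j) ^ 2 := by rw [Real.mul_self_sqrt h2]

end HW6

namespace HW7

open HW6

variable {ι : Type*} [Fintype ι]

lemma fro2_transpose (M : Matrix ι ι ℝ) : fro2 Mᵀ = fro2 M := by
  unfold fro2
  rw [Finset.sum_comm]
  simp [Matrix.transpose_apply]

lemma fro2_symmetrize (M : Matrix ι ι ℝ) : fro2 ((2:ℝ)⁻¹ • (M + Mᵀ)) ≤ fro2 M := by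
  have hentry : ∀ p q : ι, (((2:ℝ)⁻¹ • (M + Mᵀ)) p q) ^ 2 ≤ (M p q ^ 2 + M q p ^ 2) / 2 := by
    intro p q
    have : ((2:ℝ)⁻¹ • (M + Mᵀ)) p q = 2⁻¹ * (M p q + M q p) := by
      simp [Matrix.smul_apply, Matrix.add_apply, Matrix.transpose_apply, smul_eq_mul]
    rw [this]
    nlinarith [sq_nonneg (M p q - M q p)]
  calc fro2 ((2:ℝ)⁻¹ • (M + Mᵀ))
      ≤ ∑ p, ∑ q, (M p q ^ 2 + M q p ^ 2) / 2 :=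
        Finset.sum_le_sum fun p _ => Finset.sum_le_sum fun q _ => hentry p q
    _ = fro2 M := by
        have e1 : ∀ p, ∑ q, (M p q ^ 2 + M q p ^ 2) / 2
            = (∑ q, M p q ^ 2) / 2 + (∑ q, M q p ^ 2) / 2 := by
          intro p
          rw [← Finset.sum_div, Finset.sum_add_distrib, add_div]
        simp only [e1]
        rw [Finset.sum_add_distrib]
        have e2 : ∑ p, (∑ q, M q p ^ 2) / 2 = (∑ p, ∑ q, M p q ^ 2) / 2 := by
          rw [← Finset.sum_div]
          congr 1
          exact Finset.sum_comm
        have e3 : ∑ p, (∑ q, M p q ^ 2) / 2 = (∑ p, ∑ q, M p q ^ 2) / 2 := by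
          rw [← Finset.sum_div]
        rw [e2, e3]
        unfold fro2
        ring

lemma fro2_mul_left_le {R C : Matrix ι ι ℝ} {S : ℝ}
    (hR : ∀ v : ι → ℝ, ∑ i, (R.mulVec v i) ^ 2 ≤ S * ∑ j, (v j) ^ 2) :
    fro2 (R * C) ≤ S * fro2 C := by
  have hcol : ∀ q, ∑ p, ((R * C) p q) ^ 2 ≤ S * ∑ k, (C k q) ^ 2 := by
    intro q
    have h : ∀ p, (R * C) p q = R.mulVec (fun k => C k q) p := by
      intro p
      simp [Matrix.mul_apply, Matrix.mulVec, dotProduct]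
    simp only [h]
    exact hR _
  calc fro2 (R * C) = ∑ q, ∑ p, ((R * C) p q) ^ 2 := Finset.sum_comm
    _ ≤ ∑ q, S * ∑ k, (C k q) ^ 2 := Finset.sum_le_sum fun q _ => hcol q
    _ = S * ∑ q, ∑ k, (C k q) ^ 2 := by rw [Finset.mul_sum]
    _ = S * fro2 C := by
        unfold fro2
        congr 1
        exact Finset.sum_comm

lemma fro2_mul_right_le {R C : Matrix ι ι ℝ} {S : ℝ} (hRsym : Rᵀ = R)
    (hR : ∀ v : ι → ℝ, ∑ i, (R.mulVec v i) ^ 2 ≤ S * ∑ j, (v j) ^ 2) :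
    fro2 (C * R) ≤ S * fro2 C := by
  have h1 : fro2 (C * R) = fro2 (R * Cᵀ) := by
    rw [← fro2_transpose (C * R), Matrix.transpose_mul, hRsym]
  rw [h1]
  exact (fro2_mul_left_le hR).trans_eq (by rw [fro2_transpose])

variable [DecidableEq ι]

lemma sqrt_transpose {Υ : Matrix ι ι ℝ} (hΥ : Υ.PosSemidef) : hΥ.sqrtᵀ = hΥ.sqrt := by
  unfold Matrix.PosSemidef.sqrt
  rw [transpose_mul, transpose_mul, diagonal_transpose, star_eq_conjTranspose,
    conjTranspose_eq_transpose_of_trivial, transpose_transpose, mul_assoc]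

lemma sqrt_mul_self' {Υ : Matrix ι ι ℝ} (hΥ : Υ.PosSemidef) : hΥ.sqrt * hΥ.sqrt = Υ := by
  unfold Matrix.PosSemidef.sqrt
  set V : Matrix ι ι ℝ := (hΥ.1.eigenvectorUnitary : Matrix ι ι ℝ) with hV
  have hVV : star V * V = 1 :=
    (Matrix.mem_unitaryGroup_iff').mp (Matrix.IsHermitian.eigenvectorUnitary hΥ.1).2
  have hspec := hΥ.1.spectral_theorem
  rw [Unitary.conjStarAlgAut_apply] at hspec
  have hDD : diagonal (Real.sqrt ∘ hΥ.1.eigenvalues) * diagonal (Real.sqrt ∘ hΥ.1.eigenvalues)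
      = diagonal (RCLike.ofReal ∘ hΥ.1.eigenvalues) := by
    rw [diagonal_mul_diagonal]
    congr 1
    funext i
    simp [Real.mul_self_sqrt (hΥ.eigenvalues_nonneg i)]
  calc V * diagonal (Real.sqrt ∘ hΥ.1.eigenvalues) * star V *
        (V * diagonal (Real.sqrt ∘ hΥ.1.eigenvalues) * star V)
      = V * (diagonal (Real.sqrt ∘ hΥ.1.eigenvalues) * (star V * V) *
        diagonal (Real.sqrt ∘ hΥ.1.eigenvalues)) * star V := by noncomm_ring
    _ = Υ := by rw [hVV, mul_one, hDD]; exact hspec.symm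

lemma sqrt_quad {Υ : Matrix ι ι ℝ} (hΥ : Υ.PosSemidef) (v : ι → ℝ) :
    ∑ i, (hΥ.sqrt.mulVec v i) ^ 2 = v ⬝ᵥ (Υ.mulVec v) := by
  set R := hΥ.sqrt with hRdef
  calc ∑ i, (R.mulVec v i) ^ 2 = (R.mulVec v) ⬝ᵥ (R.mulVec v) := by
        simp [dotProduct, sq]
    _ = Matrix.vecMul (R.mulVec v) R ⬝ᵥ v := Matrix.dotProduct_mulVec _ _ _
    _ = (Rᵀ.mulVec (R.mulVec v)) ⬝ᵥ v := by rw [Matrix.mulVec_transpose]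
    _ = ((Rᵀ * R).mulVec v) ⬝ᵥ v := by rw [Matrix.mulVec_mulVec]
    _ = (Υ.mulVec v) ⬝ᵥ v := by rw [sqrt_transpose hΥ, sqrt_mul_self' hΥ]
    _ = v ⬝ᵥ (Υ.mulVec v) := dotProduct_comm _ _

lemma sqrt_contract {Υ : Matrix ι ι ℝ} (hΥ : Υ.PosSemidef) (v : ι → ℝ) :
    ∑ i, (hΥ.sqrt.mulVec v i) ^ 2 ≤ specNorm Υ * ∑ j, (v j) ^ 2 := by
  rw [sqrt_quad hΥ v]
  exact dot_quad_le Υ v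

end HW7

namespace HW8

variable {ν δ : Type*} [Fintype ν] [Fintype δ] [DecidableEq ν]

def blockA (U : Matrix δ δ ℝ) : Matrix (ν × δ) (ν × δ) ℝ :=
  Matrix.of fun p q => if p.1 = q.1 then U p.2 q.2 else 0

lemma blockA_mulVec (U : Matrix δ δ ℝ) (x : ν × δ → ℝ) (p : ν × δ) :
    (blockA U).mulVec x p = U.mulVec (fun j => x (p.1, j)) p.2 := by
  simp only [blockA, Matrix.mulVec, dotProduct, Matrix.of_apply]
  rw [Fintype.sum_prod_type]
  rw [Finset.sum_eq_single p.1]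
  · simp
  · intro i' _ hne
    simp [Ne.symm hne]
  · intro h
    exact absurd (Finset.mem_univ _) h

lemma quad_blockA (U : Matrix δ δ ℝ) (x : ν × δ → ℝ) :
    x ⬝ᵥ (blockA U).mulVec x = ∑ i : ν, (fun j => x (i, j)) ⬝ᵥ U.mulVec (fun j => x (i, j)) := by
  simp only [dotProduct]
  rw [Fintype.sum_prod_type]
  refine Finset.sum_congr rfl fun i _ => Finset.sum_congr rfl fun j _ => ?_
  rw [blockA_mulVec]

lemma quad_blockA_le (U : Matrix δ δ ℝ) {F : ℝ}
    (hF : ∀ y : δ → ℝ, |y ⬝ᵥ U.mulVec y| ≤ F * ∑ j, (y j) ^ 2) (x : ν × δ → ℝ) :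
    |x ⬝ᵥ (blockA U).mulVec x| ≤ F * ∑ p, (x p) ^ 2 := by
  rw [quad_blockA]
  calc |∑ i : ν, (fun j => x (i, j)) ⬝ᵥ U.mulVec (fun j => x (i, j))|
      ≤ ∑ i : ν, |(fun j => x (i, j)) ⬝ᵥ U.mulVec (fun j => x (i, j))| :=
        Finset.abs_sum_le_sum_abs _ _
    _ ≤ ∑ i : ν, F * ∑ j, (x (i, j)) ^ 2 := Finset.sum_le_sum fun i _ => hF _
    _ = F * ∑ p : ν × δ, (x p) ^ 2 := by rw [← Finset.mul_sum, Fintype.sum_prod_type]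

lemma fro2_blockA (U : Matrix δ δ ℝ) :
    HW6.fro2 (blockA (ν := ν) U) = (Fintype.card ν : ℝ) * HW6.fro2 U := by
  unfold HW6.fro2 blockA
  rw [Fintype.sum_prod_type]
  have h : ∀ i : ν, ∀ j : δ, ∑ q : ν × δ,
      (Matrix.of (fun p q : ν × δ => if p.1 = q.1 then U p.2 q.2 else 0) (i, j) q) ^ 2
      = ∑ k, (U j k) ^ 2 := by
    intro i j
    rw [Fintype.sum_prod_type]
    rw [Finset.sum_eq_single i]
    · simp
    · intro i' _ hne
      simp [Ne.symm hne]
    · intro h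
      exact absurd (Finset.mem_univ _) h
  calc ∑ i : ν, ∑ j : δ, ∑ q : ν × δ, _ = ∑ i : ν, ∑ j : δ, ∑ k, (U j k) ^ 2 := by
        refine Finset.sum_congr rfl fun i _ => Finset.sum_congr rfl fun j _ => h i j
    _ = (Fintype.card ν : ℝ) * ∑ j : δ, ∑ k, (U j k) ^ 2 := by
        rw [Finset.sum_const, Finset.card_univ, nsmul_eq_mul]

/-- Cauchy–Schwarz bound for the quadratic form of an arbitrary square matrix. -/
lemma quad_abs_le_frob [DecidableEq δ] (U : Matrix δ δ ℝ) (y : δ → ℝ) :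
    |y ⬝ᵥ U.mulVec y| ≤ frobNorm U * ∑ j, (y j) ^ 2 := by
  have hrw : y ⬝ᵥ U.mulVec y = ∑ p : δ × δ, U p.1 p.2 * (y p.1 * y p.2) := by
    rw [Fintype.sum_prod_type]
    simp only [dotProduct, Matrix.mulVec, Finset.mul_sum]
    refine Finset.sum_congr rfl fun j _ => Finset.sum_congr rfl fun k _ => ?_
    ring
  rw [hrw]
  have hCS := Finset.sum_mul_sq_le_sq_mul_sq Finset.univ (fun p : δ × δ => U p.1 p.2)
    (fun p : δ × δ => y p.1 * y p.2)
  have h1 : ∑ p : δ × δ, (y p.1 * y p.2) ^ 2 = (∑ j, (y j) ^ 2) ^ 2 := by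
    rw [Fintype.sum_prod_type, sq (∑ j, (y j) ^ 2), Finset.sum_mul_sum]
    refine Finset.sum_congr rfl fun j _ => Finset.sum_congr rfl fun k _ => ?_
    ring
  have h2 : ∑ p : δ × δ, (U p.1 p.2) ^ 2 = frobNorm U ^ 2 := by
    rw [HW6.frobNorm_sq]
    unfold HW6.fro2
    rw [Fintype.sum_prod_type]
  have hnn : (0:ℝ) ≤ ∑ j, (y j) ^ 2 := Finset.sum_nonneg fun j _ => sq_nonneg _
  calc |∑ p : δ × δ, U p.1 p.2 * (y p.1 * y p.2)|
      = Real.sqrt ((∑ p : δ × δ, U p.1 p.2 * (y p.1 * y p.2)) ^ 2) :=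
        (Real.sqrt_sq_eq_abs _).symm
    _ ≤ Real.sqrt ((∑ p : δ × δ, (U p.1 p.2) ^ 2) * ∑ p : δ × δ, (y p.1 * y p.2) ^ 2) :=
        Real.sqrt_le_sqrt hCS
    _ = Real.sqrt (frobNorm U ^ 2 * (∑ j, (y j) ^ 2) ^ 2) := by rw [h1, h2]
    _ = frobNorm U * ∑ j, (y j) ^ 2 := by
        rw [Real.sqrt_mul (sq_nonneg _), Real.sqrt_sq (HW6.frobNorm_nonneg U),
          Real.sqrt_sq hnn]

end HW8

namespace HW9

variable {ι : Type*} [Fintype ι] [DecidableEq ι]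

lemma B_isHermitian (R A' : Matrix ι ι ℝ) (hRsym : Rᵀ = R) (hA'sym : A'ᵀ = A') :
    (R * A' * R).IsHermitian := by
  unfold Matrix.IsHermitian
  rw [Matrix.conjTranspose_eq_transpose_of_trivial, Matrix.transpose_mul, Matrix.transpose_mul,
    hRsym, hA'sym, ← mul_assoc]

lemma B_transpose (R A' : Matrix ι ι ℝ) (hRsym : Rᵀ = R) (hA'sym : A'ᵀ = A') :
    (R * A' * R)ᵀ = R * A' * R := by
  rw [← Matrix.conjTranspose_eq_transpose_of_trivial]
  exact B_isHermitian R A' hRsym hA'sym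

lemma eigenvectorBasis_sum_sq {B : Matrix ι ι ℝ} (hB : B.IsHermitian) (i : ι) :
    ∑ j, (hB.eigenvectorBasis i j) ^ 2 = 1 := by
  have h1 : ‖hB.eigenvectorBasis i‖ = 1 := hB.eigenvectorBasis.orthonormal.1 i
  have h2 : ‖hB.eigenvectorBasis i‖ = Real.sqrt (∑ j, ‖hB.eigenvectorBasis i j‖ ^ 2) :=
    EuclideanSpace.norm_eq _
  rw [h1] at h2
  have h3 : ∑ j, ‖hB.eigenvectorBasis i j‖ ^ 2 = ∑ j, (hB.eigenvectorBasis i j) ^ 2 := by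
    refine Finset.sum_congr rfl fun j _ => ?_
    rw [Real.norm_eq_abs, sq_abs]
  rw [h3] at h2
  have h4 : (0:ℝ) ≤ ∑ j, (hB.eigenvectorBasis i j) ^ 2 :=
    Finset.sum_nonneg fun j _ => sq_nonneg _
  nlinarith [Real.sq_sqrt h4]

lemma eigenvalue_eq_quad {B : Matrix ι ι ℝ} (hB : B.IsHermitian) (i : ι) :
    hB.eigenvalues i = (⇑(hB.eigenvectorBasis i)) ⬝ᵥ (B.mulVec (⇑(hB.eigenvectorBasis i))) := by
  have h := hB.eigenvalues_eq i
  simpa using h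

lemma quad_RAR (R A' : Matrix ι ι ℝ) (hRsym : Rᵀ = R) (w : ι → ℝ) :
    w ⬝ᵥ ((R * A' * R).mulVec w) = (R.mulVec w) ⬝ᵥ (A'.mulVec (R.mulVec w)) := by
  rw [← Matrix.mulVec_mulVec, ← Matrix.mulVec_mulVec, Matrix.dotProduct_mulVec,
    ← Matrix.mulVec_transpose, hRsym]

lemma eigen_abs_le (R A' : Matrix ι ι ℝ) (hRsym : Rᵀ = R) {S F : ℝ} (hF : 0 ≤ F)
    (hR : ∀ v : ι → ℝ, ∑ i, (R.mulVec v i) ^ 2 ≤ S * ∑ j, (v j) ^ 2)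
    (hA' : ∀ x : ι → ℝ, |x ⬝ᵥ A'.mulVec x| ≤ F * ∑ p, (x p) ^ 2)
    (hB : (R * A' * R).IsHermitian) (i : ι) :
    |hB.eigenvalues i| ≤ S * F := by
  set w : ι → ℝ := ⇑(hB.eigenvectorBasis i) with hw
  have hnorm : ∑ j, (w j) ^ 2 = 1 := eigenvectorBasis_sum_sq hB i
  have hval : hB.eigenvalues i = (R.mulVec w) ⬝ᵥ (A'.mulVec (R.mulVec w)) := by
    rw [eigenvalue_eq_quad hB i, quad_RAR R A' hRsym]
  rw [hval]
  have h1 := hA' (R.mulVec w)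
  have h2 : ∑ p, (R.mulVec w p) ^ 2 ≤ S := by
    have := hR w
    rwa [hnorm, mul_one] at this
  calc |(R.mulVec w) ⬝ᵥ (A'.mulVec (R.mulVec w))| ≤ F * ∑ p, (R.mulVec w p) ^ 2 := h1
    _ ≤ F * S := mul_le_mul_of_nonneg_left h2 hF
    _ = S * F := mul_comm _ _

lemma eigen_sum_sq {B : Matrix ι ι ℝ} (hB : B.IsHermitian) (hBsym : Bᵀ = B) :
    ∑ i, (hB.eigenvalues i) ^ 2 = HW6.fro2 B := by
  set Vm : Matrix ι ι ℝ := (Matrix.IsHermitian.eigenvectorUnitary hB : Matrix ι ι ℝ) with hVm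
  have hco : (RCLike.ofReal ∘ hB.eigenvalues : ι → ℝ) = hB.eigenvalues := funext fun i => rfl
  have hspec : B = Vm * Matrix.diagonal hB.eigenvalues * star Vm := by
    have := hB.spectral_theorem
    rwa [Unitary.conjStarAlgAut_apply, hco] at this
  have hVV : star Vm * Vm = 1 :=
    (Matrix.mem_unitaryGroup_iff').mp (Matrix.IsHermitian.eigenvectorUnitary hB).2
  have hBB : B * B = Vm * Matrix.diagonal (fun i => hB.eigenvalues i ^ 2) * star Vm := by
    conv_lhs => rw [hspec]
    have h1 : Vm * Matrix.diagonal hB.eigenvalues * star Vm *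
        (Vm * Matrix.diagonal hB.eigenvalues * star Vm)
        = Vm * Matrix.diagonal hB.eigenvalues * (star Vm * Vm) *
          Matrix.diagonal hB.eigenvalues * star Vm := by
      noncomm_ring
    have hDD : Matrix.diagonal hB.eigenvalues * Matrix.diagonal hB.eigenvalues
        = Matrix.diagonal (fun i => hB.eigenvalues i ^ 2) := by
      rw [Matrix.diagonal_mul_diagonal]
      congr 1
      funext i
      ring
    rw [h1, hVV, mul_one]
    simp only [mul_assoc]
    rw [← mul_assoc (Matrix.diagonal hB.eigenvalues), hDD]
  have htrace1 : Matrix.trace (B * B) = ∑ i, (hB.eigenvalues i) ^ 2 := by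
    rw [hBB, Matrix.trace_mul_cycle, hVV, one_mul, Matrix.trace_diagonal]
  have htrace2 : Matrix.trace (B * B) = HW6.fro2 B := by
    unfold HW6.fro2
    rw [Matrix.trace]
    refine Finset.sum_congr rfl fun i _ => ?_
    rw [Matrix.diag_apply, Matrix.mul_apply]
    refine Finset.sum_congr rfl fun j _ => ?_
    have : B j i = B i j := congrFun (congrFun hBsym i) j
    rw [this, sq]
  rw [← htrace1, htrace2]

lemma quad_eigen_decomp {B : Matrix ι ι ℝ} (hB : B.IsHermitian) (g : ι → ℝ) :
    g ⬝ᵥ (B.mulVec g) = ∑ i, hB.eigenvalues i *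
      (((star (Matrix.IsHermitian.eigenvectorUnitary hB : Matrix ι ι ℝ)).mulVec g) i) ^ 2 := by
  set Vm : Matrix ι ι ℝ := (Matrix.IsHermitian.eigenvectorUnitary hB : Matrix ι ι ℝ) with hVm
  set Qm : Matrix ι ι ℝ := star Vm with hQm
  have hco : (RCLike.ofReal ∘ hB.eigenvalues : ι → ℝ) = hB.eigenvalues := funext fun i => rfl
  have hspec : B = Vm * Matrix.diagonal hB.eigenvalues * Qm := by
    have := hB.spectral_theorem
    rwa [Unitary.conjStarAlgAut_apply, hco] at this
  have hQT : Vmᵀ = Qm := by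
    rw [hQm, Matrix.star_eq_conjTranspose, Matrix.conjTranspose_eq_transpose_of_trivial]
  conv_lhs => rw [hspec]
  rw [← Matrix.mulVec_mulVec, ← Matrix.mulVec_mulVec, Matrix.dotProduct_mulVec,
    ← Matrix.mulVec_transpose, hQT]
  simp only [dotProduct, Matrix.mulVec_diagonal]
  refine Finset.sum_congr rfl fun i _ => ?_
  ring

lemma Q_orth {B : Matrix ι ι ℝ} (hB : B.IsHermitian) :
    (star (Matrix.IsHermitian.eigenvectorUnitary hB : Matrix ι ι ℝ))ᵀ *
      (star (Matrix.IsHermitian.eigenvectorUnitary hB : Matrix ι ι ℝ)) = 1 := by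
  set Vm : Matrix ι ι ℝ := (Matrix.IsHermitian.eigenvectorUnitary hB : Matrix ι ι ℝ) with hVm
  have h1 : Vm * star Vm = 1 :=
    (Matrix.mem_unitaryGroup_iff).mp (Matrix.IsHermitian.eigenvectorUnitary hB).2
  have h2 : (star Vm)ᵀ = Vm := by
    rw [Matrix.star_eq_conjTranspose, Matrix.conjTranspose_eq_transpose_of_trivial,
      Matrix.transpose_transpose]
  rw [h2]
  exact h1

end HW9

namespace HW10

open HW3

variable {ι : Type*} [Fintype ι] [DecidableEq ι]

lemma integrable_sq_gaussianReal : Integrable (fun y : ℝ => y ^ 2) (gaussianReal 0 1) := by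
  rw [gaussianReal_of_var_ne_zero _ one_ne_zero]
  have hpdf : (gaussianPDF 0 1)
      = fun x => ((fun y => (gaussianPDFReal 0 1 y).toNNReal) x : ℝ≥0∞) := by
    ext x; rfl
  rw [hpdf, integrable_withDensity_iff_integrable_smul
    ((measurable_gaussianPDFReal 0 1).real_toNNReal)]
  have hvol : Integrable (fun x : ℝ => gaussianPDFReal 0 1 x * x ^ 2) := by
    have h := HW2.integrable_sq_exp.const_mul ((Real.sqrt (2 * π))⁻¹)
    refine h.congr (Filter.Eventually.of_forall fun x => ?_)
    show (Real.sqrt (2 * π))⁻¹ * (x ^ 2 * rexp (-(1/2) * x ^ 2)) = gaussianPDFReal 0 1 x * x ^ 2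
    rw [HW.gauss_pdf_eq]
    ring_nf
  refine hvol.congr (Filter.Eventually.of_forall fun x => ?_)
  simp [NNReal.smul_def, Real.coe_toNNReal _ (HW.gauss_pdf_pos x).le]

lemma coord_sq_eq_prod (i : ι) (x : ι → ℝ) :
    (x i) ^ 2 = ∏ j, (if j = i then (x j) ^ 2 else 1) := by
  rw [Finset.prod_ite_eq' Finset.univ i (fun j => (x j) ^ 2)]
  simp

lemma integrable_ite_family (i : ι) :
    ∀ j : ι, Integrable (fun y : ℝ => if j = i then y ^ 2 else 1) (gaussianReal 0 1) := by
  intro j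
  by_cases hj : j = i
  · simpa [hj] using integrable_sq_gaussianReal
  · simpa [hj] using integrable_const (1 : ℝ)

lemma integrable_coord_sq (i : ι) :
    Integrable (fun x : ι → ℝ => (x i) ^ 2) (stdGaussian ι) := by
  obtain ⟨hI, _⟩ := HW3.integral_pi_prod (fun j y => if j = i then y ^ 2 else 1)
    (integrable_ite_family i)
  refine hI.congr (Filter.Eventually.of_forall fun x => ?_)
  exact (coord_sq_eq_prod i x).symm

lemma integral_coord_sq (i : ι) :
    ∫ x, (x i) ^ 2 ∂(stdGaussian ι) = 1 := by
  obtain ⟨_, hEq⟩ := HW3.integral_pi_prod (fun j y => if j = i then y ^ 2 else 1)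
    (integrable_ite_family i)
  have h1 : ∫ x, (x i) ^ 2 ∂(stdGaussian ι)
      = ∫ x, ∏ j, (if j = i then (x j) ^ 2 else 1) ∂(stdGaussian ι) :=
    integral_congr_ae (Filter.Eventually.of_forall fun x => coord_sq_eq_prod i x)
  rw [h1, hEq]
  have h2 : ∀ j : ι, (∫ y, (if j = i then y ^ 2 else 1) ∂(gaussianReal 0 1)) = 1 := by
    intro j
    by_cases hj : j = i
    · simpa [hj] using HW2.integral_sq_gaussian
    · simp [hj]
  rw [Finset.prod_congr rfl fun j _ => h2 j]
  simp

lemma integral_weighted_sum (lam : ι → ℝ) :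
    ∫ x, ∑ i, lam i * (x i) ^ 2 ∂(stdGaussian ι) = ∑ i, lam i := by
  rw [integral_finset_sum Finset.univ
    (fun i _ => (integrable_coord_sq i).const_mul (lam i))]
  refine Finset.sum_congr rfl fun i _ => ?_
  rw [integral_const_mul, integral_coord_sq, mul_one]

end HW10

namespace HW11

lemma quad_symmetrize {ι : Type*} [Fintype ι] (A : Matrix ι ι ℝ) (y : ι → ℝ) :
    y ⬝ᵥ (((2:ℝ)⁻¹ • (A + Aᵀ)).mulVec y) = y ⬝ᵥ (A.mulVec y) := by
  have h1 : y ⬝ᵥ (Aᵀ.mulVec y) = y ⬝ᵥ (A.mulVec y) := by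
    rw [Matrix.mulVec_transpose, dotProduct_comm, ← Matrix.dotProduct_mulVec]
  rw [Matrix.smul_mulVec, Matrix.add_mulVec, dotProduct_smul, dotProduct_add,
    h1, smul_eq_mul]
  ring

lemma measurable_quadForm {ι : Type*} [Fintype ι] (M : Matrix ι ι ℝ) :
    Measurable (fun y : ι → ℝ => y ⬝ᵥ (M.mulVec y)) := by
  simp only [dotProduct, Matrix.mulVec]
  refine Finset.measurable_sum _ fun i _ => (measurable_pi_apply i).mul ?_
  exact Finset.measurable_sum _ fun j _ => (measurable_pi_apply j).const_mul _

lemma trace_eq_quad {n d : ℕ} (U : Matrix (Fin d) (Fin d) ℝ) (M : Matrix (Fin n) (Fin d) ℝ) :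
    Matrix.trace (M * U * Mᵀ) = (fun p : Fin n × Fin d => M p.1 p.2) ⬝ᵥ
      ((HW8.blockA U).mulVec (fun p : Fin n × Fin d => M p.1 p.2)) := by
  rw [HW8.quad_blockA, Matrix.trace]
  refine Finset.sum_congr rfl fun i _ => ?_
  rw [Matrix.diag_apply, Matrix.mul_apply]
  simp only [Matrix.mul_apply, Matrix.transpose_apply, dotProduct, Matrix.mulVec]
  calc ∑ k, (∑ j, M i j * U j k) * M i k
      = ∑ k, ∑ j, M i j * U j k * M i k := by
        refine Finset.sum_congr rfl fun k _ => ?_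
        rw [Finset.sum_mul]
    _ = ∑ j, ∑ k, M i j * U j k * M i k := Finset.sum_comm
    _ = ∑ j, M i j * ∑ k, U j k * M i k := by
        refine Finset.sum_congr rfl fun j _ => ?_
        rw [Finset.mul_sum]
        refine Finset.sum_congr rfl fun k _ => ?_
        ring

end HW11


end AuxHW

/-- Lemma 1: Hanson–Wright-type deviation bound for `tr(X U Xᵀ)`.
There is an absolute constant `c > 0` such that for every fixed matrix `U ∈ ℝ^{d×d}` and
every random matrix `X ∈ ℝ^{n×d}` with `vec(Xᵀ) ~ N(0, Υ)` (`Υ` positive semidefinite),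
and every `u > 0`,
`P(|tr(XUXᵀ) − E tr(XUXᵀ)| > u) ≤ 2 exp(−c min(u²/(n‖Υ‖²‖U‖_F²), u/(‖Υ‖‖U‖_F)))`. -/
theorem statement0 :
    ∃ c : ℝ, 0 < c ∧
      ∀ (n d : ℕ) (W : Type) [MeasureSpace W] [IsProbabilityMeasure (ℙ : Measure W)]
        (U : Matrix (Fin d) (Fin d) ℝ) (X : W → Matrix (Fin n) (Fin d) ℝ)
        (Υ : Matrix (Fin n × Fin d) (Fin n × Fin d) ℝ) (hΥ : Υ.PosSemidef)
        (_ : Measure.map (fun w => fun p : Fin n × Fin d => X w p.1 p.2) ℙ = vecGaussian hΥ)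
        (u : ℝ), 0 < u →
        (ℙ {w : W | u < |Matrix.trace (X w * U * (X w)ᵀ) -
              ∫ w', Matrix.trace (X w' * U * (X w')ᵀ) ∂ℙ|}).toReal ≤
          2 * Real.exp (-c * min (u ^ 2 / ((n : ℝ) * specNorm Υ ^ 2 * frobNorm U ^ 2))
              (u / (specNorm Υ * frobNorm U))) := by
  refine ⟨(16:ℝ)⁻¹, by norm_num, ?_⟩
  intro n d W _ _ U X Υ hΥ hmap u hu
  have hS0 : 0 ≤ specNorm Υ := HW6.specNorm_nonneg Υ
  have hF0 : 0 ≤ frobNorm U := Real.sqrt_nonneg _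
  set Eval := ∫ w', Matrix.trace (X w' * U * (X w')ᵀ) ∂ℙ with hE
  by_cases hdeg : (n:ℝ) * specNorm Υ ^ 2 * frobNorm U ^ 2 = 0
  · -- degenerate case: the bound is trivial since the RHS is `2`
    have hb : u ^ 2 / ((n:ℝ) * specNorm Υ ^ 2 * frobNorm U ^ 2) = 0 := by
      rw [hdeg, div_zero]
    have hmin : min (u ^ 2 / ((n:ℝ) * specNorm Υ ^ 2 * frobNorm U ^ 2))
        (u / (specNorm Υ * frobNorm U)) = 0 := by
      rw [hb]
      exact min_eq_left (div_nonneg hu.le (mul_nonneg hS0 hF0))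
    rw [hmin, mul_zero, Real.exp_zero, mul_one]
    have h2 : (ℙ {w : W | u < |Matrix.trace (X w * U * (X w)ᵀ) - Eval|}) ≤ 1 := prob_le_one
    calc (ℙ {w : W | u < |Matrix.trace (X w * U * (X w)ᵀ) - Eval|}).toReal
        ≤ (1 : ENNReal).toReal := ENNReal.toReal_mono ENNReal.one_ne_top h2
      _ = 1 := by simp
      _ ≤ 2 := by norm_num
  · -- main case
    have hnne : (n:ℝ) ≠ 0 := fun h => hdeg (by rw [h]; ring)
    have hSne : specNorm Υ ≠ 0 := fun h => hdeg (by rw [h]; ring)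
    have hFne : frobNorm U ≠ 0 := fun h => hdeg (by rw [h]; ring)
    have hn : (0:ℝ) < n := lt_of_le_of_ne (Nat.cast_nonneg n) (Ne.symm hnne)
    have hS : 0 < specNorm Υ := lt_of_le_of_ne hS0 (Ne.symm hSne)
    have hF : 0 < frobNorm U := lt_of_le_of_ne hF0 (Ne.symm hFne)
    set f : W → (Fin n × Fin d → ℝ) := fun w => fun p : Fin n × Fin d => X w p.1 p.2 with hf
    have hprob : IsProbabilityMeasure (vecGaussian hΥ) := by
      unfold vecGaussian
      exact Measure.isProbabilityMeasure_map (HW5.measurable_mulVec _).aemeasurable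
    have hfae : AEMeasurable f ℙ := by
      by_contra hc
      rw [hf, Measure.map_of_not_aemeasurable hc] at hmap
      have h0 := hprob.measure_univ
      rw [← hmap] at h0
      simp at h0
    set R := hΥ.sqrt with hRdef
    set A : Matrix (Fin n × Fin d) (Fin n × Fin d) ℝ := HW8.blockA U with hA
    set A' := (2:ℝ)⁻¹ • (A + Aᵀ) with hA'
    have hA'sym : A'ᵀ = A' := by
      rw [hA', Matrix.transpose_smul, Matrix.transpose_add, Matrix.transpose_transpose,
        add_comm]
    have hRsym : Rᵀ = R := HW7.sqrt_transpose hΥ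
    have hB : (R * A' * R).IsHermitian := HW9.B_isHermitian R A' hRsym hA'sym
    set lam := hB.eigenvalues with hlam
    set Qm : Matrix (Fin n × Fin d) (Fin n × Fin d) ℝ :=
      star (Matrix.IsHermitian.eigenvectorUnitary hB : Matrix (Fin n × Fin d) (Fin n × Fin d) ℝ)
      with hQm
    have hRcontract : ∀ v : Fin n × Fin d → ℝ,
        ∑ i, (R.mulVec v i) ^ 2 ≤ specNorm Υ * ∑ j, (v j) ^ 2 := HW7.sqrt_contract hΥ
    have hAquad : ∀ x : Fin n × Fin d → ℝ, |x ⬝ᵥ A.mulVec x| ≤ frobNorm U * ∑ p, (x p) ^ 2 :=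
      HW8.quad_blockA_le U (HW8.quad_abs_le_frob U)
    have hA'quad : ∀ x : Fin n × Fin d → ℝ, |x ⬝ᵥ A'.mulVec x| ≤ frobNorm U * ∑ p, (x p) ^ 2 := by
      intro x
      rw [hA', HW11.quad_symmetrize]
      exact hAquad x
    have hKbd : ∀ i, |lam i| ≤ specNorm Υ * frobNorm U :=
      HW9.eigen_abs_le R A' hRsym hF0 hRcontract hA'quad hB
    have hsumsq : ∑ i, (lam i) ^ 2 ≤ (n:ℝ) * specNorm Υ ^ 2 * frobNorm U ^ 2 := by
      rw [hlam, HW9.eigen_sum_sq hB (HW9.B_transpose R A' hRsym hA'sym)]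
      have c1 : HW6.fro2 (R * A' * R) ≤ specNorm Υ * HW6.fro2 (A' * R) := by
        have := HW7.fro2_mul_left_le (R := R) (C := A' * R) hRcontract
        rwa [← mul_assoc] at this
      have c2 : HW6.fro2 (A' * R) ≤ specNorm Υ * HW6.fro2 A' :=
        HW7.fro2_mul_right_le hRsym hRcontract
      have c3 : HW6.fro2 A' ≤ HW6.fro2 A := by
        rw [hA']
        exact HW7.fro2_symmetrize A
      have c4 : HW6.fro2 A = (n:ℝ) * frobNorm U ^ 2 := by
        rw [hA, HW8.fro2_blockA, HW6.frobNorm_sq]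
        simp
      calc HW6.fro2 (R * A' * R) ≤ specNorm Υ * HW6.fro2 (A' * R) := c1
        _ ≤ specNorm Υ * (specNorm Υ * HW6.fro2 A') := by
            exact mul_le_mul_of_nonneg_left c2 hS0
        _ ≤ specNorm Υ * (specNorm Υ * HW6.fro2 A) := by
            refine mul_le_mul_of_nonneg_left (mul_le_mul_of_nonneg_left c3 hS0) hS0
        _ = (n:ℝ) * specNorm Υ ^ 2 * frobNorm U ^ 2 := by
            rw [c4]
            ring
    set q : (Fin n × Fin d → ℝ) → ℝ := fun y => y ⬝ᵥ (A.mulVec y) with hq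
    have hqmeas : Measurable q := HW11.measurable_quadForm A
    have htr : ∀ w, Matrix.trace (X w * U * (X w)ᵀ) = q (f w) := fun w =>
      HW11.trace_eq_quad U (X w)
    have hmeasR : Measurable (R.mulVec) := HW5.measurable_mulVec R
    have hmapRfull : Measure.map f ℙ
        = Measure.map R.mulVec (stdGaussian (Fin n × Fin d)) := by
      rw [hf] at hmap ⊢
      rw [hmap]
      rfl
    have hmeasQ : Measurable Qm.mulVec := HW5.measurable_mulVec Qm
    have hrot : Measure.map Qm.mulVec (stdGaussian (Fin n × Fin d))
        = stdGaussian (Fin n × Fin d) :=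
      HW5.map_mulVec_stdGaussian Qm (HW9.Q_orth hB)
    have hqRg : ∀ g : Fin n × Fin d → ℝ,
        q (R.mulVec g) = ∑ i, lam i * ((Qm.mulVec g) i) ^ 2 := by
      intro g
      show (R.mulVec g) ⬝ᵥ (A.mulVec (R.mulVec g)) = ∑ i, lam i * ((Qm.mulVec g) i) ^ 2
      have e1 : (R.mulVec g) ⬝ᵥ (A.mulVec (R.mulVec g))
          = (R.mulVec g) ⬝ᵥ (A'.mulVec (R.mulVec g)) := by
        rw [hA', HW11.quad_symmetrize]
      rw [e1, ← HW9.quad_RAR R A' hRsym g, HW9.quad_eigen_decomp hB g]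
    have hmeas2 : Measurable (fun x : Fin n × Fin d → ℝ => ∑ i, lam i * (x i) ^ 2) := by
      refine Finset.measurable_sum _ fun i _ => ?_
      exact (((measurable_pi_apply i).pow_const 2).const_mul _)
    have hE2 : Eval = ∑ i, lam i := by
      rw [hE]
      have e1 : ∫ w', Matrix.trace (X w' * U * (X w')ᵀ) ∂ℙ = ∫ w', q (f w') ∂ℙ :=
        integral_congr_ae (Filter.Eventually.of_forall fun w => htr w)
      have e2 : ∫ w', q (f w') ∂ℙ = ∫ y, q y ∂(Measure.map f ℙ) :=
        (integral_map hfae hqmeas.aestronglyMeasurable).symm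
      have e3 : ∫ y, q y ∂(Measure.map R.mulVec (stdGaussian (Fin n × Fin d)))
          = ∫ g, q (R.mulVec g) ∂(stdGaussian (Fin n × Fin d)) :=
        integral_map hmeasR.aemeasurable hqmeas.aestronglyMeasurable
      have e4 : ∫ g, q (R.mulVec g) ∂(stdGaussian (Fin n × Fin d))
          = ∫ g, ∑ i, lam i * ((Qm.mulVec g) i) ^ 2 ∂(stdGaussian (Fin n × Fin d)) :=
        integral_congr_ae (Filter.Eventually.of_forall fun g => hqRg g)
      have e5 : ∫ x, ∑ i, lam i * (x i) ^ 2
            ∂(Measure.map Qm.mulVec (stdGaussian (Fin n × Fin d)))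
          = ∫ g, ∑ i, lam i * ((Qm.mulVec g) i) ^ 2 ∂(stdGaussian (Fin n × Fin d)) :=
        integral_map hmeasQ.aemeasurable hmeas2.aestronglyMeasurable
      rw [e1, e2, hmapRfull, e3, e4, ← e5, hrot, HW10.integral_weighted_sum]
    set s : Set (Fin n × Fin d → ℝ) := {y | u < |q y - Eval|} with hs
    have hsmeas : MeasurableSet s :=
      measurableSet_lt measurable_const ((hqmeas.sub measurable_const).abs)
    have hset : {w : W | u < |Matrix.trace (X w * U * (X w)ᵀ) - Eval|} = f ⁻¹' s := by
      ext w
      simp only [hs, Set.mem_setOf_eq, Set.mem_preimage, htr w]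
    set T : Set (Fin n × Fin d → ℝ) :=
      {x | u < |(∑ i, lam i * (x i) ^ 2) - ∑ i, lam i|} with hT
    have hTmeas : MeasurableSet T :=
      measurableSet_lt measurable_const ((hmeas2.sub measurable_const).abs)
    have hpre : R.mulVec ⁻¹' s = Qm.mulVec ⁻¹' T := by
      ext g
      simp only [hs, hT, Set.mem_preimage, Set.mem_setOf_eq, hqRg g, hE2]
    have hmeaschain : ℙ {w : W | u < |Matrix.trace (X w * U * (X w)ᵀ) - Eval|}
        = (stdGaussian (Fin n × Fin d)) T := by
      rw [hset, ← Measure.map_apply_of_aemeasurable hfae hsmeas, hmapRfull,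
        Measure.map_apply hmeasR hsmeas, hpre,
        ← Measure.map_apply hmeasQ hTmeas, hrot]
    rw [hmeaschain]
    have := HW4.tail_two_sided lam (specNorm Υ * frobNorm U)
      ((n:ℝ) * specNorm Υ ^ 2 * frobNorm U ^ 2) u (by positivity) (by positivity)
      hKbd hsumsq hu
    exact this
end
end

section
/- Under the eigenvalue assumptions on Ω*, let 0 < R ≤ ν_min/2 and let Ω, Ω' ∈ ℝ^{m×m} be symmetric matrices with ‖Ω − Ω*‖_F ≤ R and ‖Ω' − Ω*‖_F ≤ R (so that Ω and Ω' are positive definite). Then the function h(Ω) = −log det Ω + tr(Ω*⁻¹ Ω) satisfies (1/(8 ν_max²)) ‖Ω' − Ω‖_F² ≤ h(Ω') − h(Ω) − ⟨−Ω⁻¹ + Ω*⁻¹, Ω' − Ω⟩ ≤ (2/ν_min²) ‖Ω' − Ω‖_F², where ⟨A, B⟩ = tr(Aᵀ B). -/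
open MeasureTheory ProbabilityTheory Matrix
open scoped Classical ProbabilityTheory

noncomputable section

set_option maxHeartbeats 1000000

section Stmt3AuxSec
open Polynomial
namespace Stmt3Aux
variable {m : ℕ}


variable {m : ℕ}

lemma frobNorm_nonneg (M : Matrix (Fin m) (Fin m) ℝ) : 0 ≤ frobNorm M := Real.sqrt_nonneg _

lemma frobNorm_sq (M : Matrix (Fin m) (Fin m) ℝ) :
    frobNorm M ^ 2 = ∑ i, ∑ j, (M i j) ^ 2 :=
  Real.sq_sqrt (by positivity)

lemma frobNorm_eq_norm (M : Matrix (Fin m) (Fin m) ℝ) :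
    frobNorm M = ‖(WithLp.equiv 2 (Fin m × Fin m → ℝ)).symm (fun p => M p.1 p.2)‖ := by
  rw [EuclideanSpace.norm_eq]
  simp [frobNorm, Fintype.sum_prod_type, Real.norm_eq_abs, sq_abs]

lemma frobNorm_combo {X Y : Matrix (Fin m) (Fin m) ℝ} {R t : ℝ}
    (ht0 : 0 ≤ t) (ht1 : t ≤ 1) (hX : frobNorm X ≤ R) (hY : frobNorm Y ≤ R) :
    frobNorm ((1 - t) • X + t • Y) ≤ R := by
  rw [frobNorm_eq_norm] at *
  have hrw : (WithLp.equiv 2 (Fin m × Fin m → ℝ)).symm (fun p => ((1 - t) • X + t • Y) p.1 p.2)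
      = (1 - t) • (WithLp.equiv 2 (Fin m × Fin m → ℝ)).symm (fun p => X p.1 p.2)
        + t • (WithLp.equiv 2 (Fin m × Fin m → ℝ)).symm (fun p => Y p.1 p.2) := rfl
  rw [hrw]
  calc ‖_ + _‖ ≤ ‖(1 - t) • (WithLp.equiv 2 (Fin m × Fin m → ℝ)).symm (fun p => X p.1 p.2)‖
      + ‖t • (WithLp.equiv 2 (Fin m × Fin m → ℝ)).symm (fun p => Y p.1 p.2)‖ := norm_add_le _ _
    _ ≤ (1 - t) * R + t * R := by
        rw [norm_smul, norm_smul, Real.norm_eq_abs, Real.norm_eq_abs,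
          abs_of_nonneg (by linarith), abs_of_nonneg ht0]
        have h1 : 0 ≤ ‖(WithLp.equiv 2 (Fin m × Fin m → ℝ)).symm (fun p => X p.1 p.2)‖ := norm_nonneg _
        have h2 : 0 ≤ ‖(WithLp.equiv 2 (Fin m × Fin m → ℝ)).symm (fun p => Y p.1 p.2)‖ := norm_nonneg _
        gcongr <;> linarith
    _ = R := by ring

lemma quad_abs_le (E : Matrix (Fin m) (Fin m) ℝ) (v : Fin m → ℝ) :
    |v ⬝ᵥ E *ᵥ v| ≤ frobNorm E * ∑ i, v i ^ 2 := by
  have hrw : v ⬝ᵥ E *ᵥ v = ∑ p : Fin m × Fin m, E p.1 p.2 * (v p.1 * v p.2) := by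
    simp [dotProduct, mulVec, Fintype.sum_prod_type, Finset.mul_sum]
    ring_nf
    exact Finset.sum_congr rfl fun i _ => Finset.sum_congr rfl fun j _ => by ring
  have hcs := Finset.sum_mul_sq_le_sq_mul_sq Finset.univ (fun p : Fin m × Fin m => E p.1 p.2)
    (fun p : Fin m × Fin m => v p.1 * v p.2)
  have h2 : ∑ p : Fin m × Fin m, (v p.1 * v p.2) ^ 2 = (∑ i, v i ^ 2) ^ 2 := by
    rw [Fintype.sum_prod_type, sq, Finset.sum_mul_sum]
    simp only [mul_pow, sq]
    exact Finset.sum_congr rfl fun i _ => Finset.sum_congr rfl fun j _ => by ring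
  have h3 : (v ⬝ᵥ E *ᵥ v) ^ 2 ≤ (frobNorm E * ∑ i, v i ^ 2) ^ 2 := by
    rw [hrw, mul_pow, frobNorm_sq]
    calc (∑ p : Fin m × Fin m, E p.1 p.2 * (v p.1 * v p.2)) ^ 2
        ≤ (∑ p : Fin m × Fin m, E p.1 p.2 ^ 2) * ∑ p : Fin m × Fin m, (v p.1 * v p.2) ^ 2 := hcs
      _ = (∑ i, ∑ j, E i j ^ 2) * (∑ i, v i ^ 2) ^ 2 := by rw [h2, Fintype.sum_prod_type]
  have hnn : 0 ≤ frobNorm E * ∑ i, v i ^ 2 :=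
    mul_nonneg (frobNorm_nonneg _) (by positivity)
  exact abs_le.mpr (abs_le_of_sq_le_sq' h3 hnn)




lemma diag_nonneg {M : Matrix (Fin m) (Fin m) ℝ} (hM : M.PosSemidef) (i : Fin m) :
    0 ≤ M i i := by
  have := hM.dotProduct_mulVec_nonneg (Pi.single i 1)
  simpa [star_trivial, dotProduct, mulVec, Pi.single_apply, Finset.sum_ite_eq, Finset.sum_ite_eq'] using this

lemma trace_nonneg_of_posSemidef {M : Matrix (Fin m) (Fin m) ℝ} (hM : M.PosSemidef) :
    0 ≤ M.trace := by
  rw [Matrix.trace]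
  exact Finset.sum_nonneg fun i _ => diag_nonneg hM i

lemma trace_mul_nonneg {P C : Matrix (Fin m) (Fin m) ℝ} (hP : P.PosSemidef)
    (hC : C.PosSemidef) : 0 ≤ (P * C).trace := by
  open scoped MatrixOrder in
  have hs : (CFC.sqrt P).PosSemidef := (CFC.sqrt_nonneg P).posSemidef
  open scoped MatrixOrder in
  have hmul : P * C = CFC.sqrt P * (CFC.sqrt P * C) := by
    rw [← mul_assoc, CFC.sqrt_mul_sqrt_self P hP.nonneg]
  have h1 : (P * C).trace = (CFC.sqrt P * C * CFC.sqrt P).trace := by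
    rw [hmul, trace_mul_comm, mul_assoc]
  rw [h1]
  have h2 : (CFC.sqrt P * C * (CFC.sqrt P)ᴴ).PosSemidef := hC.mul_mul_conjTranspose_same (CFC.sqrt P)
  rw [hs.isHermitian.eq] at h2
  exact trace_nonneg_of_posSemidef h2

/-- Sandwich lower bound: if `α‖v‖² ≤ vᵀAv` and `C` is PSD then `α tr C ≤ tr (A C)`. -/
lemma trace_sandwich_lower {A C : Matrix (Fin m) (Fin m) ℝ} {α : ℝ}
    (hA : A.IsHermitian) (hC : C.PosSemidef)
    (h : ∀ v : Fin m → ℝ, α * (∑ i, v i ^ 2) ≤ v ⬝ᵥ A *ᵥ v) :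
    α * C.trace ≤ (A * C).trace := by
  have hone : (α • (1 : Matrix (Fin m) (Fin m) ℝ)).IsHermitian := by
    simp [Matrix.IsHermitian, Matrix.conjTranspose_smul]
  have hpsd : (A - α • (1 : Matrix (Fin m) (Fin m) ℝ)).PosSemidef := by
    refine .of_dotProduct_mulVec_nonneg (hA.sub hone) fun v => ?_
    have hv : v ⬝ᵥ (α • (1 : Matrix (Fin m) (Fin m) ℝ)) *ᵥ v = α * ∑ i, v i ^ 2 := by
      simp only [smul_mulVec, one_mulVec, dotProduct_smul, smul_eq_mul, dotProduct,
        Finset.mul_sum]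
      exact Finset.sum_congr rfl fun i _ => by simp [Pi.smul_apply, smul_eq_mul]; ring
    have := h v
    simp only [star_trivial, sub_mulVec, dotProduct_sub, hv]
    linarith
  have := trace_mul_nonneg hpsd hC
  rw [Matrix.sub_mul, trace_sub, Matrix.smul_mul, Matrix.one_mul, trace_smul,
    smul_eq_mul] at this
  linarith

lemma trace_sandwich_upper {A C : Matrix (Fin m) (Fin m) ℝ} {β : ℝ}
    (hA : A.IsHermitian) (hC : C.PosSemidef)
    (h : ∀ v : Fin m → ℝ, v ⬝ᵥ A *ᵥ v ≤ β * (∑ i, v i ^ 2)) :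
    (A * C).trace ≤ β * C.trace := by
  have hone : (β • (1 : Matrix (Fin m) (Fin m) ℝ)).IsHermitian := by
    simp [Matrix.IsHermitian, Matrix.conjTranspose_smul]
  have hpsd : (β • (1 : Matrix (Fin m) (Fin m) ℝ) - A).PosSemidef := by
    refine .of_dotProduct_mulVec_nonneg (hone.sub hA) fun v => ?_
    have hv : v ⬝ᵥ (β • (1 : Matrix (Fin m) (Fin m) ℝ)) *ᵥ v = β * ∑ i, v i ^ 2 := by
      simp only [smul_mulVec, one_mulVec, dotProduct_smul, smul_eq_mul, dotProduct,
        Finset.mul_sum]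
      exact Finset.sum_congr rfl fun i _ => by simp [Pi.smul_apply, smul_eq_mul]; ring
    have := h v
    simp only [star_trivial, sub_mulVec, dotProduct_sub, hv]
    linarith
  have := trace_mul_nonneg hpsd hC
  rw [Matrix.sub_mul, trace_sub, Matrix.smul_mul, Matrix.one_mul, trace_smul,
    smul_eq_mul] at this
  linarith




/-- symmetry of bilinear form for Hermitian real matrix -/
lemma bilin_symm {A : Matrix (Fin m) (Fin m) ℝ} (hA : A.IsHermitian)
    (x y : Fin m → ℝ) : x ⬝ᵥ A *ᵥ y = y ⬝ᵥ A *ᵥ x := by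
  have h1 : x ⬝ᵥ A *ᵥ y = (x ᵥ* A) ⬝ᵥ y := (Matrix.dotProduct_mulVec x A y)
  have h2 : x ᵥ* A = Aᵀ *ᵥ x := (Matrix.mulVec_transpose A x).symm
  have h3 : Aᵀ = A := by
    have := hA.eq
    rwa [Matrix.conjTranspose_eq_transpose_of_trivial] at this
  rw [h1, h2, h3, dotProduct_comm]

/-- Cauchy–Schwarz for the PSD bilinear form of a real PSD matrix. -/
lemma psd_cauchy_schwarz {A : Matrix (Fin m) (Fin m) ℝ} (hA : A.PosSemidef)
    (x y : Fin m → ℝ) : (x ⬝ᵥ A *ᵥ y) ^ 2 ≤ (x ⬝ᵥ A *ᵥ x) * (y ⬝ᵥ A *ᵥ y) := by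
  have key : ∀ t : ℝ, 0 ≤ (y ⬝ᵥ A *ᵥ y) * (t * t) + (2 * (x ⬝ᵥ A *ᵥ y)) * t + (x ⬝ᵥ A *ᵥ x) := by
    intro t
    have h := hA.dotProduct_mulVec_nonneg (x + t • y)
    simp only [star_trivial] at h
    have hexp : (x + t • y) ⬝ᵥ A *ᵥ (x + t • y)
        = (x ⬝ᵥ A *ᵥ x) + t * (x ⬝ᵥ A *ᵥ y) + t * (y ⬝ᵥ A *ᵥ x) + t * t * (y ⬝ᵥ A *ᵥ y) := by
      simp only [Matrix.mulVec_add, Matrix.mulVec_smul, dotProduct_add, add_dotProduct,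
        smul_dotProduct, dotProduct_smul, smul_eq_mul]
      ring
    rw [hexp, bilin_symm hA.isHermitian y x] at h
    linarith
  have hd := discrim_le_zero key
  rw [discrim] at hd
  nlinarith [hd]

/-- Upper bound on the quadratic form of the inverse from a lower bound on that of `A`. -/
lemma inv_quad_upper {A : Matrix (Fin m) (Fin m) ℝ} {α : ℝ} (hα : 0 < α)
    (hA : A.PosDef) (h : ∀ v : Fin m → ℝ, α * (∑ i, v i ^ 2) ≤ v ⬝ᵥ A *ᵥ v)
    (v : Fin m → ℝ) : v ⬝ᵥ A⁻¹ *ᵥ v ≤ (1 / α) * ∑ i, v i ^ 2 := by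
  set w := A⁻¹ *ᵥ v with hw
  have hAw : A *ᵥ w = v := by
    rw [hw, Matrix.mulVec_mulVec, Matrix.mul_nonsing_inv _ (isUnit_iff_ne_zero.mpr hA.det_pos.ne'), Matrix.one_mulVec]
  have hQw : α * (∑ i, w i ^ 2) ≤ w ⬝ᵥ A *ᵥ w := h w
  have hform : v ⬝ᵥ A⁻¹ *ᵥ v = w ⬝ᵥ A *ᵥ w := by
    rw [← hw, hAw]
    exact dotProduct_comm v w
  set P := v ⬝ᵥ A⁻¹ *ᵥ v with hP
  set T := ∑ i, v i ^ 2 with hT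
  set S := ∑ i, w i ^ 2 with hS
  have hTnn : 0 ≤ T := by positivity
  have hSnn : 0 ≤ S := by positivity
  have h1 : α * S ≤ P := by rw [hform]; exact hQw
  have h2 : P ^ 2 ≤ T * S := by
    have hcs := Finset.sum_mul_sq_le_sq_mul_sq Finset.univ v w
    have hPvw : P = ∑ i, v i * w i := by
      rw [hP, ← hw]; rfl
    rw [hPvw]
    simpa [hT, hS] using hcs
  rcases le_or_gt P 0 with hPle | hPpos
  · exact hPle.trans (by positivity)
  · rw [one_div, ← div_eq_inv_mul, le_div_iff₀ hα] at *
    nlinarith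

/-- Lower bound on the quadratic form of the inverse from an upper bound on that of `A`. -/
lemma inv_quad_lower {A : Matrix (Fin m) (Fin m) ℝ} {β : ℝ} (hβ : 0 < β)
    (hA : A.PosDef) (h : ∀ v : Fin m → ℝ, v ⬝ᵥ A *ᵥ v ≤ β * (∑ i, v i ^ 2))
    (v : Fin m → ℝ) : (1 / β) * (∑ i, v i ^ 2) ≤ v ⬝ᵥ A⁻¹ *ᵥ v := by
  set w := A⁻¹ *ᵥ v with hw
  have hAw : A *ᵥ w = v := by
    rw [hw, Matrix.mulVec_mulVec, Matrix.mul_nonsing_inv _ (isUnit_iff_ne_zero.mpr hA.det_pos.ne'), Matrix.one_mulVec]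
  have hcs := psd_cauchy_schwarz hA.posSemidef v w
  rw [hAw] at hcs
  -- hcs : (v ⬝ᵥ v)^2 ≤ (v ⬝ᵥ A *ᵥ v) * (w ⬝ᵥ A *ᵥ w)  -- careful: middle arg
  have hvv : v ⬝ᵥ v = ∑ i, v i ^ 2 := by
    simp [dotProduct, sq]
  rw [dotProduct_comm w v] at hcs
  set T := ∑ i, v i ^ 2 with hT
  have hTnn : 0 ≤ T := by positivity
  have hup : v ⬝ᵥ A *ᵥ v ≤ β * T := h v
  have hQnn : 0 ≤ v ⬝ᵥ w := by
    have := hA.inv.posSemidef.dotProduct_mulVec_nonneg v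
    simpa [star_trivial, ← hw] using this
  have hQAnn : 0 ≤ v ⬝ᵥ A *ᵥ v := by
    have := hA.posSemidef.dotProduct_mulVec_nonneg v
    simpa [star_trivial] using this
  rw [hvv] at hcs
  rw [one_div, ← div_eq_inv_mul, div_le_iff₀ hβ]
  rcases eq_or_lt_of_le hTnn with hT0 | hTpos
  · nlinarith [mul_nonneg hQnn hβ.le]
  · have k1 : v ⬝ᵥ A *ᵥ v * (v ⬝ᵥ w) ≤ β * T * (v ⬝ᵥ w) :=
      mul_le_mul_of_nonneg_right hup hQnn
    have k2 : T ^ 2 ≤ β * T * (v ⬝ᵥ w) := hcs.trans k1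
    have k3 : T ≤ β * (v ⬝ᵥ w) := by
      have := (mul_le_mul_iff_left₀ hTpos).mp (by nlinarith : T * T ≤ (β * (v ⬝ᵥ w)) * T)
      linarith
    linarith




lemma posDef_of_quad {A : Matrix (Fin m) (Fin m) ℝ} {α : ℝ} (hα : 0 < α)
    (hA : A.IsHermitian) (h : ∀ v : Fin m → ℝ, α * (∑ i, v i ^ 2) ≤ v ⬝ᵥ A *ᵥ v) :
    A.PosDef := by
  refine .of_dotProduct_mulVec_pos hA fun v hv => ?_
  have hsum : 0 < ∑ i, v i ^ 2 := by
    obtain ⟨i, hi⟩ := Function.ne_iff.mp hv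
    exact Finset.sum_pos' (fun j _ => sq_nonneg _) ⟨i, Finset.mem_univ i, lt_of_le_of_ne (sq_nonneg _) (Ne.symm (pow_ne_zero 2 hi))⟩
  have := h v
  simp only [star_trivial]
  nlinarith

lemma hasDerivAt_log_det (Ω Δ : Matrix (Fin m) (Fin m) ℝ) (s : ℝ)
    (hdet : (Ω + s • Δ).det ≠ 0) :
    HasDerivAt (fun t : ℝ => Real.log (Ω + t • Δ).det)
      (((Ω + s • Δ)⁻¹ * Δ).trace) s := by
  set N := Ω + s • Δ with hN
  set B := N⁻¹ * Δ with hB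
  set P : Polynomial ℝ := (Matrix.det (1 + (Polynomial.X : ℝ[X]) • B.map Polynomial.C)).divX.divX
    with hP
  have hfun : ∀ t : ℝ, (Ω + t • Δ).det
      = N.det * (1 + B.trace * (t - s) + P.eval (t - s) * (t - s) ^ 2) := by
    intro t
    have hNB : N * B = Δ := by
      rw [hB, ← Matrix.mul_assoc, Matrix.mul_nonsing_inv _ (isUnit_iff_ne_zero.mpr hdet),
        Matrix.one_mul]
    have hNt : Ω + t • Δ = N * (1 + (t - s) • B) := by
      rw [Matrix.mul_add, Matrix.mul_one, Matrix.mul_smul, hNB, hN]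
      module
    rw [hNt, det_mul, Matrix.det_one_add_smul (t - s) B, hP]
  have h1 : HasDerivAt (fun t : ℝ => t - s) 1 s := (hasDerivAt_id s).sub_const s
  have hpoly : HasDerivAt (fun t : ℝ => P.eval (t - s)) (P.derivative.eval (s - s) * 1) s := by
    have := HasDerivAt.comp (x := s) (h₂ := fun y : ℝ => P.eval y)
      (h := fun t : ℝ => t - s) (P.hasDerivAt (s - s)) h1
    exact this
  have hsq : HasDerivAt (fun t : ℝ => (t - s) ^ 2) (2 * (s - s) ^ 1 * 1) s := by
    simpa using h1.fun_pow 2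
  have hlin : HasDerivAt (fun t : ℝ => B.trace * (t - s)) (B.trace * 1) s := h1.const_mul _
  have hF : HasDerivAt
      (fun t : ℝ => N.det * (1 + B.trace * (t - s) + P.eval (t - s) * (t - s) ^ 2))
      (N.det * ((0 + B.trace * 1) + (P.derivative.eval (s - s) * 1 * (s - s) ^ 2
        + P.eval (s - s) * (2 * (s - s) ^ 1 * 1)))) s := by
    exact (((hasDerivAt_const s (1:ℝ)).add hlin).add (hpoly.mul hsq)).const_mul _
  have hF' : HasDerivAt (fun t : ℝ => (Ω + t • Δ).det) (N.det * B.trace) s := by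
    have heq : (fun t : ℝ => N.det * (1 + B.trace * (t - s) + P.eval (t - s) * (t - s) ^ 2))
        = fun t : ℝ => (Ω + t • Δ).det := funext fun t => (hfun t).symm
    rw [heq] at hF
    convert hF using 1
    simp
  have hlog := hF'.log (by simpa [← hN] using hdet)
  convert hlog using 1
  rw [mul_comm, mul_div_assoc, div_self (by simpa [← hN] using hdet), mul_one]



lemma continuousOn_trace_inv_mul (Ω Δ C : Matrix (Fin m) (Fin m) ℝ)
    (hdet : ∀ t ∈ Set.uIcc (0:ℝ) 1, (Ω + t • Δ).det ≠ 0) :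
    ContinuousOn (fun t : ℝ => (((Ω + t • Δ))⁻¹ * C).trace) (Set.uIcc (0:ℝ) 1) := by
  have hcont : Continuous fun t : ℝ => Ω + t • Δ :=
    continuous_const.add (continuous_id.smul continuous_const)
  have heq : ∀ t : ℝ, (((Ω + t • Δ))⁻¹ * C).trace
      = ((Ω + t • Δ).det)⁻¹ * ((Ω + t • Δ).adjugate * C).trace := by
    intro t
    rw [Matrix.inv_def, Matrix.smul_mul, trace_smul, Ring.inverse_eq_inv, smul_eq_mul]
  simp only [heq]
  exact (hcont.matrix_det.continuousOn.inv₀ hdet).mul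
    ((hcont.matrix_adjugate.matrix_mul continuous_const).matrix_trace.continuousOn)


lemma mInner_eq_trace_of_symm (A : Matrix (Fin m) (Fin m) ℝ) {B : Matrix (Fin m) (Fin m) ℝ}
    (hB : B.IsSymm) : mInner A B = (A * B).trace := by
  simp only [mInner, Matrix.trace, Matrix.diag_apply, Matrix.mul_apply]
  exact Finset.sum_congr rfl fun i _ => Finset.sum_congr rfl fun j _ => by
    rw [hB.apply i j]

end Stmt3Aux
end Stmt3AuxSec

set_option maxHeartbeats 1000000 in
/-- Lemma 5: strong convexity and smoothness of the population loss in `Ω`.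
Under the eigenvalue assumptions on `Ω*`, for `0 < R ≤ ν_min/2` and symmetric `Ω, Ω'` in the
Frobenius ball of radius `R` around `Ω*`, the function `h(Ω) = −log det Ω + tr(Ω*⁻¹ Ω)`
satisfies `(1/(8ν_max²))‖Ω'−Ω‖_F² ≤ h(Ω') − h(Ω) − ⟨−Ω⁻¹ + Ω*⁻¹, Ω'−Ω⟩ ≤ (2/ν_min²)‖Ω'−Ω‖_F²`. -/
theorem statement3 (m : ℕ)
    (Ωstar Ω Ω' : Matrix (Fin m) (Fin m) ℝ)
    (νmin νmax R : ℝ)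
    (hνmin : 0 < νmin) (hνle : νmin ≤ νmax)
    (hΩsymm : Ωstar.IsSymm)
    (hΩeig : ∀ v : Fin m → ℝ, νmin * (∑ i, v i ^ 2) ≤ v ⬝ᵥ Ωstar.mulVec v ∧
      v ⬝ᵥ Ωstar.mulVec v ≤ νmax * (∑ i, v i ^ 2))
    (hRpos : 0 < R) (hR : R ≤ νmin / 2)
    (hΩsym : Ω.IsSymm) (hΩ'sym : Ω'.IsSymm)
    (hΩ : frobNorm (Ω - Ωstar) ≤ R) (hΩ' : frobNorm (Ω' - Ωstar) ≤ R) :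
    1 / (8 * νmax ^ 2) * frobNorm (Ω' - Ω) ^ 2 ≤
      (-Real.log (Ω').det + Matrix.trace (Ωstar⁻¹ * Ω')) -
        (-Real.log Ω.det + Matrix.trace (Ωstar⁻¹ * Ω)) -
        mInner (-Ω⁻¹ + Ωstar⁻¹) (Ω' - Ω) ∧
    (-Real.log (Ω').det + Matrix.trace (Ωstar⁻¹ * Ω')) -
        (-Real.log Ω.det + Matrix.trace (Ωstar⁻¹ * Ω)) -
        mInner (-Ω⁻¹ + Ωstar⁻¹) (Ω' - Ω) ≤
      2 / νmin ^ 2 * frobNorm (Ω' - Ω) ^ 2 := by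
  have hνmaxpos : 0 < νmax := lt_of_lt_of_le hνmin hνle
  set Δ := Ω' - Ω with hΔdef
  have hapos0 : 0 < νmin - R := by linarith
  have hbpos0 : 0 < νmax + R := by linarith
  set a := νmin - R with hadef
  set b := νmax + R with hbdef
  clear_value a b
  have hΔsym : Δ.IsSymm := hΩ'sym.sub hΩsym
  have hNsym : ∀ t : ℝ, (Ω + t • Δ).IsSymm := fun t => hΩsym.add (hΔsym.smul t)
  have hNherm : ∀ t : ℝ, (Ω + t • Δ).IsHermitian := fun t => by
    rw [Matrix.IsHermitian, Matrix.conjTranspose_eq_transpose_of_trivial]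
    exact (hNsym t).eq
  have h0mem : (0:ℝ) ∈ Set.Icc (0:ℝ) 1 := by norm_num
  have hNfrob : ∀ t ∈ Set.Icc (0:ℝ) 1, frobNorm ((Ω + t • Δ) - Ωstar) ≤ R := by
    intro t ht
    have hrw : (Ω + t • Δ) - Ωstar = (1 - t) • (Ω - Ωstar) + t • (Ω' - Ωstar) := by
      rw [hΔdef]; module
    rw [hrw]
    exact Stmt3Aux.frobNorm_combo ht.1 ht.2 hΩ hΩ'
  have hsumnn : ∀ v : Fin m → ℝ, (0:ℝ) ≤ ∑ i, v i ^ 2 := fun v => by positivity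
  have hquadlo : ∀ t ∈ Set.Icc (0:ℝ) 1, ∀ v : Fin m → ℝ,
      a * (∑ i, v i ^ 2) ≤ v ⬝ᵥ (Ω + t • Δ) *ᵥ v := by
    intro t ht v
    have h1 := (hΩeig v).1
    have h2 := Stmt3Aux.quad_abs_le ((Ω + t • Δ) - Ωstar) v
    have h3 : v ⬝ᵥ ((Ω + t • Δ) - Ωstar) *ᵥ v
        = v ⬝ᵥ (Ω + t • Δ) *ᵥ v - v ⬝ᵥ Ωstar *ᵥ v := by
      rw [Matrix.sub_mulVec, dotProduct_sub]
    have h5 : frobNorm ((Ω + t • Δ) - Ωstar) * (∑ i, v i ^ 2) ≤ R * ∑ i, v i ^ 2 :=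
      mul_le_mul_of_nonneg_right (hNfrob t ht) (hsumnn v)
    have h6 := (abs_le.mp (h2.trans h5)).1
    rw [h3] at h6
    rw [hadef]
    linarith
  have hquadhi : ∀ t ∈ Set.Icc (0:ℝ) 1, ∀ v : Fin m → ℝ,
      v ⬝ᵥ (Ω + t • Δ) *ᵥ v ≤ b * (∑ i, v i ^ 2) := by
    intro t ht v
    have h1 := (hΩeig v).2
    have h2 := Stmt3Aux.quad_abs_le ((Ω + t • Δ) - Ωstar) v
    have h3 : v ⬝ᵥ ((Ω + t • Δ) - Ωstar) *ᵥ v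
        = v ⬝ᵥ (Ω + t • Δ) *ᵥ v - v ⬝ᵥ Ωstar *ᵥ v := by
      rw [Matrix.sub_mulVec, dotProduct_sub]
    have h5 : frobNorm ((Ω + t • Δ) - Ωstar) * (∑ i, v i ^ 2) ≤ R * ∑ i, v i ^ 2 :=
      mul_le_mul_of_nonneg_right (hNfrob t ht) (hsumnn v)
    have h6 := (abs_le.mp (h2.trans h5)).2
    rw [h3] at h6
    rw [hbdef]
    linarith
  have hPD : ∀ t ∈ Set.Icc (0:ℝ) 1, (Ω + t • Δ).PosDef := fun t ht =>
    Stmt3Aux.posDef_of_quad hapos0 (hNherm t) (hquadlo t ht)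
  have hend0 : Ω + (0:ℝ) • Δ = Ω := by simp
  have hend1 : Ω + (1:ℝ) • Δ = Ω' := by rw [hΔdef]; module
  have hΩPD : Ω.PosDef := by have := hPD 0 h0mem; rwa [hend0] at this
  have hΩquadlo : ∀ v : Fin m → ℝ, a * (∑ i, v i ^ 2) ≤ v ⬝ᵥ Ω *ᵥ v := by
    intro v; have := hquadlo 0 h0mem v; rwa [hend0] at this
  have hΩquadhi : ∀ v : Fin m → ℝ, v ⬝ᵥ Ω *ᵥ v ≤ b * (∑ i, v i ^ 2) := by
    intro v; have := hquadhi 0 h0mem v; rwa [hend0] at this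
  have hdetne : ∀ t ∈ Set.uIcc (0:ℝ) 1, (Ω + t • Δ).det ≠ 0 := by
    rw [Set.uIcc_of_le (zero_le_one)]
    exact fun t ht => (hPD t ht).det_pos.ne'
  have hderiv : ∀ t ∈ Set.uIcc (0:ℝ) 1,
      HasDerivAt (fun u : ℝ => Real.log (Ω + u • Δ).det) (((Ω + t • Δ)⁻¹ * Δ).trace) t :=
    fun t ht => Stmt3Aux.hasDerivAt_log_det Ω Δ t (hdetne t ht)
  have hint : IntervalIntegrable (fun t : ℝ => ((Ω + t • Δ)⁻¹ * Δ).trace)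
      MeasureTheory.volume 0 1 :=
    (Stmt3Aux.continuousOn_trace_inv_mul Ω Δ Δ hdetne).intervalIntegrable
  have hFTC := intervalIntegral.integral_eq_sub_of_hasDerivAt hderiv hint
  simp only [hend1, hend0] at hFTC
  set F2 := frobNorm Δ ^ 2 with hF2def
  clear_value F2
  have hF2nn : (0:ℝ) ≤ F2 := by rw [hF2def]; positivity
  have hkey : ∀ t ∈ Set.Icc (0:ℝ) 1,
      (t * (F2 / b ^ 2) ≤ (Ω⁻¹ * Δ).trace - ((Ω + t • Δ)⁻¹ * Δ).trace ∧
       (Ω⁻¹ * Δ).trace - ((Ω + t • Δ)⁻¹ * Δ).trace ≤ t * (F2 / a ^ 2)) := by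
    intro t ht
    have hNtPD : (Ω + t • Δ).PosDef := hPD t ht
    have hΩdet : IsUnit Ω.det := isUnit_iff_ne_zero.mpr hΩPD.det_pos.ne'
    have hNtdet : IsUnit (Ω + t • Δ).det := isUnit_iff_ne_zero.mpr hNtPD.det_pos.ne'
    have hdiff : Ω⁻¹ - (Ω + t • Δ)⁻¹ = t • (Ω⁻¹ * Δ * (Ω + t • Δ)⁻¹) := by
      have e1 : Ω⁻¹ * ((Ω + t • Δ) - Ω) * (Ω + t • Δ)⁻¹ = Ω⁻¹ - (Ω + t • Δ)⁻¹ := by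
        rw [Matrix.mul_sub, Matrix.sub_mul, Matrix.mul_assoc Ω⁻¹ (Ω + t • Δ) (Ω + t • Δ)⁻¹,
          Matrix.mul_nonsing_inv _ hNtdet, Matrix.mul_one, Matrix.nonsing_inv_mul _ hΩdet,
          Matrix.one_mul]
      have e2 : (Ω + t • Δ) - Ω = t • Δ := add_sub_cancel_left Ω (t • Δ)
      rw [e2] at e1
      rw [← e1, Matrix.mul_smul, Matrix.smul_mul]
    have hphi : (Ω⁻¹ * Δ).trace - ((Ω + t • Δ)⁻¹ * Δ).trace
        = t * (Ω⁻¹ * (Δ * (Ω + t • Δ)⁻¹ * Δ)).trace := by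
      rw [← trace_sub, ← Matrix.sub_mul, hdiff, Matrix.smul_mul, trace_smul, smul_eq_mul]
      congr 2
      simp only [Matrix.mul_assoc]
    have hΔconj : Δᴴ = Δ := by
      rw [Matrix.conjTranspose_eq_transpose_of_trivial, hΔsym.eq]
    have hC : (Δ * (Ω + t • Δ)⁻¹ * Δ).PosSemidef := by
      have := hNtPD.inv.posSemidef.mul_mul_conjTranspose_same Δ
      rwa [hΔconj] at this
    have hDD : (Δ * Δ).PosSemidef := by
      have := Matrix.posSemidef_conjTranspose_mul_self Δ
      rwa [hΔconj] at this
    have htrDD : (Δ * Δ).trace = F2 := by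
      rw [hF2def, Stmt3Aux.frobNorm_sq]
      simp only [Matrix.trace, Matrix.diag_apply, Matrix.mul_apply]
      exact Finset.sum_congr rfl fun i _ => Finset.sum_congr rfl fun j _ => by
        rw [hΔsym.apply i j]; ring
    have hcyc : (Δ * (Ω + t • Δ)⁻¹ * Δ).trace = ((Ω + t • Δ)⁻¹ * (Δ * Δ)).trace := by
      rw [Matrix.trace_mul_cycle Δ ((Ω + t • Δ)⁻¹) Δ, Matrix.trace_mul_comm]
    have hinvlo := Stmt3Aux.inv_quad_lower hbpos0 hNtPD (hquadhi t ht)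
    have hinvhi := Stmt3Aux.inv_quad_upper hapos0 hNtPD (hquadlo t ht)
    have hΩinvlo := Stmt3Aux.inv_quad_lower hbpos0 hΩPD hΩquadhi
    have hΩinvhi := Stmt3Aux.inv_quad_upper hapos0 hΩPD hΩquadlo
    have hs1lo := Stmt3Aux.trace_sandwich_lower hNtPD.inv.isHermitian hDD hinvlo
    have hs1hi := Stmt3Aux.trace_sandwich_upper hNtPD.inv.isHermitian hDD hinvhi
    have hs2lo := Stmt3Aux.trace_sandwich_lower hΩPD.inv.isHermitian hC hΩinvlo
    have hs2hi := Stmt3Aux.trace_sandwich_upper hΩPD.inv.isHermitian hC hΩinvhi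
    rw [htrDD] at hs1lo hs1hi
    rw [← hcyc] at hs1lo hs1hi
    have ht0 : 0 ≤ t := ht.1
    constructor
    · have k2 : (1/b) * ((1/b) * F2) ≤ (Ω⁻¹ * (Δ * (Ω + t • Δ)⁻¹ * Δ)).trace :=
        le_trans (mul_le_mul_of_nonneg_left hs1lo (by positivity)) hs2lo
      have k3 : F2 / b ^ 2 ≤ (Ω⁻¹ * (Δ * (Ω + t • Δ)⁻¹ * Δ)).trace := by
        calc F2 / b ^ 2 = (1/b) * ((1/b) * F2) := by ring
          _ ≤ _ := k2
      rw [hphi]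
      exact mul_le_mul_of_nonneg_left k3 ht0
    · have k2 : (Ω⁻¹ * (Δ * (Ω + t • Δ)⁻¹ * Δ)).trace ≤ (1/a) * ((1/a) * F2) :=
        le_trans hs2hi (mul_le_mul_of_nonneg_left hs1hi (by positivity))
      have k3 : (Ω⁻¹ * (Δ * (Ω + t • Δ)⁻¹ * Δ)).trace ≤ F2 / a ^ 2 := by
        refine k2.trans (le_of_eq ?_)
        ring
      rw [hphi]
      exact mul_le_mul_of_nonneg_left k3 ht0
  have hφint : IntervalIntegrable
      (fun t : ℝ => (Ω⁻¹ * Δ).trace - ((Ω + t • Δ)⁻¹ * Δ).trace) MeasureTheory.volume 0 1 :=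
    intervalIntegrable_const.sub hint
  have hlof : IntervalIntegrable (fun t : ℝ => t * (F2 / b ^ 2)) MeasureTheory.volume 0 1 :=
    (continuous_id.mul continuous_const).intervalIntegrable 0 1
  have hhif : IntervalIntegrable (fun t : ℝ => t * (F2 / a ^ 2)) MeasureTheory.volume 0 1 :=
    (continuous_id.mul continuous_const).intervalIntegrable 0 1
  have hIlo := intervalIntegral.integral_mono_on zero_le_one hlof hφint
      (fun t ht => (hkey t ht).1)
  have hIhi := intervalIntegral.integral_mono_on zero_le_one hφint hhif
      (fun t ht => (hkey t ht).2)
  have hIφ : (∫ t in (0:ℝ)..1, ((Ω⁻¹ * Δ).trace - ((Ω + t • Δ)⁻¹ * Δ).trace))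
      = (Ω⁻¹ * Δ).trace - (Real.log Ω'.det - Real.log Ω.det) := by
    rw [intervalIntegral.integral_sub intervalIntegrable_const hint, hFTC,
      intervalIntegral.integral_const]
    simp
  have hIc : ∀ c : ℝ, (∫ t in (0:ℝ)..1, t * c) = c / 2 := by
    intro c
    rw [intervalIntegral.integral_mul_const, integral_id]
    ring
  rw [hIφ, hIc (F2 / b ^ 2)] at hIlo
  rw [hIφ, hIc (F2 / a ^ 2)] at hIhi
  have hmInner : mInner (-Ω⁻¹ + Ωstar⁻¹) Δ
      = -(Ω⁻¹ * Δ).trace + ((Ωstar⁻¹ * Ω').trace - (Ωstar⁻¹ * Ω).trace) := by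
    have hstar : (Ωstar⁻¹ * Δ).trace = (Ωstar⁻¹ * Ω').trace - (Ωstar⁻¹ * Ω).trace := by
      rw [hΔdef, Matrix.mul_sub, trace_sub]
    rw [Stmt3Aux.mInner_eq_trace_of_symm _ hΔsym, Matrix.add_mul, Matrix.neg_mul, trace_add,
      trace_neg, hstar]
  have hEeq : (-Real.log Ω'.det + (Ωstar⁻¹ * Ω').trace) - (-Real.log Ω.det + (Ωstar⁻¹ * Ω).trace)
      - mInner (-Ω⁻¹ + Ωstar⁻¹) Δ
      = (Ω⁻¹ * Δ).trace - (Real.log Ω'.det - Real.log Ω.det) := by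
    rw [hmInner]; ring
  constructor
  · rw [hEeq]
    refine le_trans ?_ hIlo
    have hble : b ≤ 2 * νmax := by rw [hbdef]; linarith
    have hcmp : 1 / (8 * νmax ^ 2) ≤ 1 / (2 * b ^ 2) := by
      apply one_div_le_one_div_of_le (by positivity)
      nlinarith
    calc 1 / (8 * νmax ^ 2) * F2 ≤ 1 / (2 * b ^ 2) * F2 :=
          mul_le_mul_of_nonneg_right hcmp hF2nn
      _ = F2 / b ^ 2 / 2 := by ring
  · rw [hEeq]
    refine le_trans hIhi ?_
    have hale : νmin / 2 ≤ a := by rw [hadef]; linarith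
    have hcmp : 1 / (2 * a ^ 2) ≤ 2 / νmin ^ 2 := by
      rw [div_le_div_iff₀ (by positivity) (by positivity)]
      nlinarith
    calc F2 / a ^ 2 / 2 = 1 / (2 * a ^ 2) * F2 := by ring
      _ ≤ 2 / νmin ^ 2 * F2 := mul_le_mul_of_nonneg_right hcmp hF2nn
end
end
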